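/- arXiv:1009.0720 — 3 statements merged into one kernel-verified Lean document; each statement's English description precedes it below -/
import Mathlib

section
/- Let I ⊆ {1,…,m} be nonempty. If there exists x₀ ∈ ℝ^m_{>0} such that the ω-limit set ω(x₀) of the forward solution of the mass-action system ẋ = Γ R(x) with x(0) = x₀ satisfies ω(x₀) ∩ L_I ≠ ∅, then I is a semi-locking set. -/
open scoped BigOperators
open Matrix Filter

/-- The stoichiometric matrix `Γ ∈ ℝ^{m×r}`, `Γ j i = β i j - α i j`. -/
noncomputable def Gamma {m r : ℕ} (a b : Fin r → Fin m → ℕ) : Matrix (Fin m) (Fin r) ℝ :=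
  fun j i => (b i j : ℝ) - (a i j : ℝ)

/-- Mass-action reaction rates `R_i(x) = k_i ∏_j x_j^{α_{ij}}`. -/
noncomputable def rate {m r : ℕ} (a : Fin r → Fin m → ℕ) (k : Fin r → ℝ)
    (x : Fin m → ℝ) : Fin r → ℝ :=
  fun i => k i * ∏ j, x j ^ (a i j)

/-- A nonempty `I` is a semi-locking set (siphon) if every reaction producing a species
in `I` consumes a species in `I`. -/
def IsSemiLocking {m r : ℕ} (a b : Fin r → Fin m → ℕ) (I : Set (Fin m)) : Prop :=
  I.Nonempty ∧ ∀ i : Fin r, (∃ j ∈ I, 0 < b i j) → ∃ l ∈ I, 0 < a i l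

/-- A nonempty `I` is a locking set (deadlock) if every reaction consumes a species in `I`. -/
def IsLocking {m r : ℕ} (a : Fin r → Fin m → ℕ) (I : Set (Fin m)) : Prop :=
  I.Nonempty ∧ ∀ i : Fin r, ∃ l ∈ I, 0 < a i l

/-- `L_I = {x ∈ ℝ^m_{≥0} : x_i = 0 for i ∈ I, x_i > 0 for i ∉ I}`. -/
def LI {m : ℕ} (I : Set (Fin m)) : Set (Fin m → ℝ) :=
  {x | (∀ i, 0 ≤ x i) ∧ (∀ i ∈ I, x i = 0) ∧ ∀ i ∉ I, 0 < x i}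

/-- Boundary of the positive orthant of `ℝ^m`. -/
def posBoundary (m : ℕ) : Set (Fin m → ℝ) :=
  {x | (∀ i, 0 ≤ x i) ∧ ∃ i, x i = 0}

/-- The stoichiometric subspace `S = range Γ`. -/
noncomputable def stoichSubspace {m r : ℕ} (a b : Fin r → Fin m → ℕ) :
    Submodule ℝ (Fin m → ℝ) :=
  LinearMap.range (Gamma a b).mulVecLin

/-- The positive stoichiometric compatibility class `C_{x₀} = (x₀ + S) ∩ ℝ^m_{>0}`. -/
def compatClass {m r : ℕ} (a b : Fin r → Fin m → ℕ) (x₀ : Fin m → ℝ) :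
    Set (Fin m → ℝ) :=
  {x | (∀ i, 0 < x i) ∧ x - x₀ ∈ stoichSubspace a b}

/-- `F_I = closure(C_{x₀}) ∩ L_I`. -/
def FI {m r : ℕ} (a b : Fin r → Fin m → ℕ) (x₀ : Fin m → ℝ) (I : Set (Fin m)) :
    Set (Fin m → ℝ) :=
  closure (compatClass a b x₀) ∩ LI I

/-- The dimension of the affine hull of a set in `ℝ^m`. -/
noncomputable def setDim {m : ℕ} (F : Set (Fin m → ℝ)) : ℕ :=
  Module.finrank ℝ (affineSpan ℝ F).direction

/-- `F` is a facet of a compatibility class: nonempty with affine-hull dimension `s - 1`,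
where `s = rank Γ`. -/
def IsFacet {m r : ℕ} (a b : Fin r → Fin m → ℕ) (F : Set (Fin m → ℝ)) : Prop :=
  F.Nonempty ∧ setDim F = (Gamma a b).rank - 1

/-- `F` is a vertex: nonempty with affine-hull dimension `0`. -/
def IsVertex {m : ℕ} (F : Set (Fin m → ℝ)) : Prop :=
  F.Nonempty ∧ setDim F = 0

/-- A global forward solution of the mass-action system `ẋ = Γ R(x)`. -/
def IsForwardSolution {m r : ℕ} (a b : Fin r → Fin m → ℕ) (k : Fin r → ℝ)
    (x : ℝ → Fin m → ℝ) : Prop :=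
  ∀ t : ℝ, 0 ≤ t → HasDerivAt x ((Gamma a b).mulVec (rate a k (x t))) t

/-- The ω-limit set of a forward trajectory. -/
def omegaLimitSet {m : ℕ} (x : ℝ → Fin m → ℝ) : Set (Fin m → ℝ) :=
  {y | MapClusterPt y atTop x}

/-- `R_i ≼_I R_j` : `α i l ≥ α j l` for all `l ∈ I`, strict for some `l ∈ I`. -/
def prec {m r : ℕ} (a : Fin r → Fin m → ℕ) (I : Set (Fin m)) (i j : Fin r) : Prop :=
  (∀ l ∈ I, a j l ≤ a i l) ∧ ∃ l ∈ I, a j l < a i l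

/-- `R_I = {(i,j) : R_i ≼_I R_j}`. -/
def precSet {m r : ℕ} (a : Fin r → Fin m → ℕ) (I : Set (Fin m)) : Set (Fin r × Fin r) :=
  {p | prec a I p.1 p.2}

/-- The feasibility cone relative to `J`. -/
def feasCone {r : ℕ} (J : Set (Fin r × Fin r)) (ε : ℝ) : Set (Fin r → ℝ) :=
  {v | (∀ i, 0 ≤ v i) ∧ ∀ p ∈ J, v p.1 ≤ ε * v p.2}

/-- The criticality cone `C(I)`. -/
def critCone {m r : ℕ} (a b : Fin r → Fin m → ℕ) (I : Set (Fin m)) : Set (Fin r → ℝ) :=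
  {v | (∀ i, 0 ≤ v i) ∧ ∀ l ∈ I, (Gamma a b).mulVec v l ≤ 0}

/-- `ker(I,J,ε)`. -/
def kerIJ {m r : ℕ} (a b : Fin r → Fin m → ℕ) (I : Set (Fin m))
    (J : Set (Fin r × Fin r)) (ε : ℝ) : Set (Fin r → ℝ) :=
  {v | (∀ i, 0 ≤ v i) ∧ (∀ l ∈ I, (Gamma a b).mulVec v l = 0) ∧ ∀ p ∈ J, v p.1 = ε * v p.2}

/-- Dynamical non-emptiability (Angeli–De Leenheer–Sontag): `F_ε(I) ∩ C(I) = {0}`. -/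
def DynNonEmptiable {m r : ℕ} (a b : Fin r → Fin m → ℕ) (I : Set (Fin m)) : Prop :=
  ∃ ε > (0:ℝ), critCone a b I ∩ feasCone (precSet a I) ε = {0}

/-- Weak dynamical non-emptiability: `C(I) ∩ F_ε(J) ⊆ ker(I,J,ε)` for some `ε > 0`, `J ⊆ R_I`. -/
def WeaklyDynNonEmptiable {m r : ℕ} (a b : Fin r → Fin m → ℕ) (I : Set (Fin m)) : Prop :=
  ∃ ε > (0:ℝ), ∃ J ⊆ precSet a I, critCone a b I ∩ feasCone J ε ⊆ kerIJ a b I J ε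

/-- `I` contains the support of a semi-conservation vector. -/
def ContainsSemiConsSupport {m r : ℕ} (a b : Fin r → Fin m → ℕ) (I : Set (Fin m)) : Prop :=
  ∃ c : Fin m → ℝ, (∀ i, 0 ≤ c i) ∧ (∃ i, 0 < c i) ∧
    Matrix.vecMul c (Gamma a b) = 0 ∧ ∀ i, 0 < c i → i ∈ I

/-- A semi-locking set is critical if it contains no support of a semi-conservation vector. -/
def IsCritical {m r : ℕ} (a b : Fin r → Fin m → ℕ) (I : Set (Fin m)) : Prop :=
  ¬ ContainsSemiConsSupport a b I

/-- Weak reversibility: in the directed reaction graph on complexes, the reactant complex of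
every reaction is reachable from its product complex (equivalently, every connected
component is strongly connected). -/
def WeaklyReversible {m r : ℕ} (a b : Fin r → Fin m → ℕ) : Prop :=
  ∀ i : Fin r,
    Relation.ReflTransGen (fun y z : Fin m → ℕ => ∃ i', a i' = y ∧ b i' = z) (b i) (a i)

/-- The system is conservative: `cᵀ Γ = 0` for some strictly positive `c`. -/
def Conservative {m r : ℕ} (a b : Fin r → Fin m → ℕ) : Prop :=
  ∃ c : Fin m → ℝ, (∀ i, 0 < c i) ∧ Matrix.vecMul c (Gamma a b) = 0

lemma abs_pow_sub_pow_le' {ρ z w : ℝ} (hρ : 1 ≤ ρ) (hz : |z| ≤ ρ) (hw : |w| ≤ ρ) (n : ℕ) :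
    |z ^ n - w ^ n| ≤ n * ρ ^ n * |z - w| := by
  induction n with
  | zero => simp
  | succ n ih =>
    have hρ0 : (0:ℝ) ≤ ρ := le_trans zero_le_one hρ
    have h1 : z ^ (n+1) - w ^ (n+1) = z * (z ^ n - w ^ n) + (z - w) * w ^ n := by ring
    have h2 : |z ^ (n+1) - w ^ (n+1)| ≤ |z| * |z ^ n - w ^ n| + |z - w| * |w| ^ n := by
      rw [h1]
      refine (abs_add_le _ _).trans ?_
      rw [abs_mul, abs_mul, abs_pow]
    have h3 : |z| * |z ^ n - w ^ n| ≤ ρ * (n * ρ ^ n * |z - w|) := by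
      apply mul_le_mul hz ih (abs_nonneg _) hρ0
    have h4 : |z - w| * |w| ^ n ≤ |z - w| * ρ ^ n := by
      apply mul_le_mul_of_nonneg_left (pow_le_pow_left₀ (abs_nonneg _) hw n) (abs_nonneg _)
    have h5 : ρ ^ n ≤ ρ ^ (n+1) := pow_le_pow_right₀ hρ (Nat.le_succ n)
    have hps : ρ ^ (n+1) = ρ ^ n * ρ := pow_succ ρ n
    have h0 : (0:ℝ) ≤ |z - w| := abs_nonneg _
    have e1 : ρ * (↑n * ρ ^ n * |z - w|) = ↑n * ρ ^ (n+1) * |z - w| := by rw [hps]; ring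
    have e2 : |z - w| * ρ ^ n ≤ |z - w| * ρ ^ (n+1) := mul_le_mul_of_nonneg_left h5 h0
    push_cast
    rw [e1] at h3
    nlinarith [h2, h3, h4, e2]

lemma abs_prod_pow_le' {m : ℕ} {ρ : ℝ} (hρ : 1 ≤ ρ) (z : Fin m → ℝ)
    (hz : ∀ l, |z l| ≤ ρ) (e : Fin m → ℕ) (s : Finset (Fin m)) :
    |∏ l ∈ s, z l ^ e l| ≤ ρ ^ (∑ l ∈ s, e l) := by
  rw [Finset.abs_prod]
  calc ∏ l ∈ s, |z l ^ e l| = ∏ l ∈ s, |z l| ^ e l := by simp [abs_pow]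
    _ ≤ ∏ l ∈ s, ρ ^ e l := Finset.prod_le_prod (fun l _ => pow_nonneg (abs_nonneg _) _)
        (fun l _ => pow_le_pow_left₀ (abs_nonneg _) (hz l) _)
    _ = ρ ^ (∑ l ∈ s, e l) := by rw [Finset.prod_pow_eq_pow_sum]

lemma abs_prod_sub_prod_le' {m : ℕ} {ρ : ℝ} (hρ : 1 ≤ ρ) (z w : Fin m → ℝ)
    (hz : ∀ l, |z l| ≤ ρ) (hw : ∀ l, |w l| ≤ ρ) (e : Fin m → ℕ) (s : Finset (Fin m)) :
    |∏ l ∈ s, z l ^ e l - ∏ l ∈ s, w l ^ e l| ≤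
      ρ ^ (∑ l ∈ s, e l) * ∑ l ∈ s, (e l : ℝ) * |z l - w l| := by
  classical
  induction s using Finset.induction_on with
  | empty => simp
  | @insert i s his ih =>
    rw [Finset.prod_insert his, Finset.prod_insert his, Finset.sum_insert his,
      Finset.sum_insert his]
    have hρ0 : (0:ℝ) ≤ ρ := le_trans zero_le_one hρ
    have hA : |z i ^ e i| ≤ ρ ^ e i := by
      rw [abs_pow]; exact pow_le_pow_left₀ (abs_nonneg _) (hz i) _
    have hC : |z i ^ e i - w i ^ e i| ≤ (e i : ℝ) * ρ ^ e i * |z i - w i| :=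
      abs_pow_sub_pow_le' hρ (hz i) (hw i) (e i)
    have hD : |∏ l ∈ s, w l ^ e l| ≤ ρ ^ (∑ l ∈ s, e l) := abs_prod_pow_le' hρ w hw e s
    have hT : (0:ℝ) ≤ ∑ l ∈ s, (e l : ℝ) * |z l - w l| :=
      Finset.sum_nonneg fun l _ => mul_nonneg (by positivity) (abs_nonneg _)
    have htri : |z i ^ e i * ∏ l ∈ s, z l ^ e l - w i ^ e i * ∏ l ∈ s, w l ^ e l| ≤
        |z i ^ e i| * |∏ l ∈ s, z l ^ e l - ∏ l ∈ s, w l ^ e l| +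
        |z i ^ e i - w i ^ e i| * |∏ l ∈ s, w l ^ e l| := by
      have : z i ^ e i * ∏ l ∈ s, z l ^ e l - w i ^ e i * ∏ l ∈ s, w l ^ e l =
          z i ^ e i * (∏ l ∈ s, z l ^ e l - ∏ l ∈ s, w l ^ e l) +
          (z i ^ e i - w i ^ e i) * ∏ l ∈ s, w l ^ e l := by ring
      rw [this]
      exact (abs_add_le _ _).trans (by rw [abs_mul, abs_mul])
    have k1 : |z i ^ e i| * |∏ l ∈ s, z l ^ e l - ∏ l ∈ s, w l ^ e l| ≤
        ρ ^ e i * (ρ ^ (∑ l ∈ s, e l) * ∑ l ∈ s, (e l : ℝ) * |z l - w l|) :=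
      mul_le_mul hA ih (abs_nonneg _) (by positivity)
    have k2 : |z i ^ e i - w i ^ e i| * |∏ l ∈ s, w l ^ e l| ≤
        ((e i : ℝ) * ρ ^ e i * |z i - w i|) * ρ ^ (∑ l ∈ s, e l) :=
      mul_le_mul hC hD (abs_nonneg _) (by positivity)
    have hexp : ρ ^ (e i + ∑ l ∈ s, e l) = ρ ^ e i * ρ ^ (∑ l ∈ s, e l) := pow_add ρ _ _
    rw [hexp]
    nlinarith [htri, k1, k2]

lemma mulVec_rate_apply {m r : ℕ} (a b : Fin r → Fin m → ℕ) (k : Fin r → ℝ)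
    (z : Fin m → ℝ) (j : Fin m) :
    (Gamma a b).mulVec (rate a k z) j
      = ∑ i, ((b i j : ℝ) - (a i j : ℝ)) * (k i * ∏ l, z l ^ a i l) := by
  simp [Matrix.mulVec, dotProduct, Gamma, rate]

lemma quasipos {m r : ℕ} (a b : Fin r → Fin m → ℕ) (k : Fin r → ℝ) (hk : ∀ i, 0 < k i)
    {ρ : ℝ} (hρ : 1 ≤ ρ) (z : Fin m → ℝ) (hz : ∀ l, |z l| ≤ ρ) (j : Fin m) (hzj : z j ≤ 0) :
    -((∑ i, (∑ l, ((a i l : ℝ) + b i l)) * (k i * (ρ ^ (∑ l, a i l) * ∑ l, (a i l : ℝ)))) *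
        ∑ l, max (-(z l)) 0) ≤ (Gamma a b).mulVec (rate a k z) j := by
  classical
  set N := ∑ l, max (-(z l)) 0 with hNdef
  set w : Fin m → ℝ := fun l => max (z l) 0 with hwdef
  have hρ0 : (0:ℝ) ≤ ρ := le_trans zero_le_one hρ
  have hw0 : ∀ l, 0 ≤ w l := fun l => le_max_right _ _
  have hwρ : ∀ l, |w l| ≤ ρ := by
    intro l
    rw [abs_of_nonneg (hw0 l)]
    exact max_le ((le_abs_self _).trans (hz l)) hρ0
  have hzw : ∀ l, |z l - w l| = max (-(z l)) 0 := by
    intro l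
    rcases le_total (z l) 0 with h | h
    · simp only [hwdef]
      rw [max_eq_right h, max_eq_left (by linarith), sub_zero, abs_of_nonpos h]
    · simp only [hwdef]
      rw [max_eq_left h, max_eq_right (by linarith), sub_self, abs_zero]
  have hmaxN : ∀ l, max (-(z l)) 0 ≤ N := by
    intro l
    exact Finset.single_le_sum (f := fun l => max (-(z l)) 0)
      (fun l _ => le_max_right _ _) (Finset.mem_univ l)
  have hN0 : 0 ≤ N := Finset.sum_nonneg fun l _ => le_max_right _ _
  -- f_j(w) ≥ 0
  have hfw : 0 ≤ (Gamma a b).mulVec (rate a k w) j := by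
    rw [mulVec_rate_apply]
    apply Finset.sum_nonneg
    intro i _
    by_cases haij : a i j = 0
    · have h1 : (0:ℝ) ≤ (b i j : ℝ) - (a i j : ℝ) := by
        simp [haij]
      exact mul_nonneg h1 (mul_nonneg (hk i).le
        (Finset.prod_nonneg fun l _ => pow_nonneg (hw0 l) _))
    · have hwj : w j = 0 := max_eq_right hzj
      have : ∏ l, w l ^ a i l = 0 :=
        Finset.prod_eq_zero (Finset.mem_univ j) (by rw [hwj, zero_pow haij])
      rw [this]
      simp
  -- Lipschitz estimate
  have h1 : |(Gamma a b).mulVec (rate a k z) j - (Gamma a b).mulVec (rate a k w) j| ≤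
      (∑ i, (∑ l, ((a i l : ℝ) + b i l)) * (k i * (ρ ^ (∑ l, a i l) * ∑ l, (a i l : ℝ)))) * N := by
    rw [mulVec_rate_apply, mulVec_rate_apply, ← Finset.sum_sub_distrib, Finset.sum_mul]
    refine (Finset.abs_sum_le_sum_abs _ _).trans (Finset.sum_le_sum ?_)
    intro i _
    have hrw : ((b i j : ℝ) - (a i j : ℝ)) * (k i * ∏ l, z l ^ a i l) -
        ((b i j : ℝ) - (a i j : ℝ)) * (k i * ∏ l, w l ^ a i l) =
        (((b i j : ℝ) - (a i j : ℝ)) * k i) * (∏ l, z l ^ a i l - ∏ l, w l ^ a i l) := by ring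
    rw [hrw, abs_mul, abs_mul, abs_of_pos (hk i)]
    have hc : |(b i j : ℝ) - (a i j : ℝ)| ≤ ∑ l, ((a i l : ℝ) + b i l) := by
      have h1 : (a i j : ℝ) + b i j ≤ ∑ l, ((a i l : ℝ) + b i l) :=
        Finset.single_le_sum (f := fun l => (a i l : ℝ) + b i l)
          (fun l _ => by positivity) (Finset.mem_univ j)
      rw [abs_le]
      refine ⟨?_, ?_⟩ <;>
        nlinarith [(Nat.cast_nonneg (a i j) : (0:ℝ) ≤ _), (Nat.cast_nonneg (b i j) : (0:ℝ) ≤ _), h1]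
    have hP : |∏ l, z l ^ a i l - ∏ l, w l ^ a i l| ≤
        ρ ^ (∑ l, a i l) * ((∑ l, (a i l : ℝ)) * N) := by
      refine (abs_prod_sub_prod_le' hρ z w hz hwρ (a i) Finset.univ).trans ?_
      have : ∑ l, (a i l : ℝ) * |z l - w l| ≤ (∑ l, (a i l : ℝ)) * N := by
        rw [Finset.sum_mul]
        refine Finset.sum_le_sum ?_
        intro l _
        rw [hzw l]
        exact mul_le_mul_of_nonneg_left (hmaxN l) (by positivity)
      exact mul_le_mul_of_nonneg_left this (by positivity)
    calc |(b i j : ℝ) - (a i j : ℝ)| * k i * |∏ l, z l ^ a i l - ∏ l, w l ^ a i l|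
        ≤ (∑ l, ((a i l : ℝ) + b i l)) * k i * (ρ ^ (∑ l, a i l) * ((∑ l, (a i l : ℝ)) * N)) := by
          have hcnn : (0:ℝ) ≤ ∑ l, ((a i l : ℝ) + b i l) :=
            Finset.sum_nonneg fun l _ => by positivity
          exact mul_le_mul (mul_le_mul_of_nonneg_right hc (hk i).le) hP (abs_nonneg _)
            (mul_nonneg hcnn (hk i).le)
      _ = (∑ l, ((a i l : ℝ) + b i l)) * (k i * (ρ ^ (∑ l, a i l) * ∑ l, (a i l : ℝ))) * N := by
          ring
  have := (abs_le.1 h1).1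
  linarith

lemma coord_hasDerivAt {m : ℕ} {x : ℝ → Fin m → ℝ} {v : Fin m → ℝ} {t : ℝ}
    (h : HasDerivAt x v t) (j : Fin m) : HasDerivAt (fun s => x s j) (v j) t :=
  (ContinuousLinearMap.proj (R := ℝ) (φ := fun _ : Fin m => ℝ) j).hasFDerivAt.comp_hasDerivAt t h

set_option maxHeartbeats 1000000 in
lemma invariance {m r : ℕ} (a b : Fin r → Fin m → ℕ) (k : Fin r → ℝ) (hk : ∀ i, 0 < k i)
    (x₀ : Fin m → ℝ) (hx₀ : ∀ i, 0 < x₀ i) (x : ℝ → Fin m → ℝ) (hinit : x 0 = x₀)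
    (hsol : IsForwardSolution a b k x) : ∀ t, 0 ≤ t → ∀ j, 0 ≤ x t j := by
  classical
  intro t₀ ht₀ j₀
  have hcontAt : ∀ t : ℝ, 0 ≤ t → ContinuousAt x t := fun t ht => (hsol t ht).continuousAt
  have hcont : ContinuousOn x (Set.Icc 0 t₀) := fun t ht => (hcontAt t ht.1).continuousWithinAt
  obtain ⟨C0, hC0⟩ := (isCompact_Icc (a := (0:ℝ)) (b := t₀)).exists_bound_of_continuousOn hcont
  set ρ := max C0 1 with hρdef
  have hρ1 : (1:ℝ) ≤ ρ := le_max_right _ _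
  have hρ : ∀ t ∈ Set.Icc (0:ℝ) t₀, ∀ l, |x t l| ≤ ρ := by
    intro t ht l
    calc |x t l| = ‖x t l‖ := (Real.norm_eq_abs _).symm
      _ ≤ ‖x t‖ := norm_le_pi_norm (x t) l
      _ ≤ C0 := hC0 t ht
      _ ≤ ρ := le_max_left _ _
  set L := ∑ i, (∑ l, ((a i l : ℝ) + b i l)) * (k i * (ρ ^ (∑ l, a i l) * ∑ l, (a i l : ℝ)))
    with hLdef
  have hL : 0 ≤ L := by
    apply Finset.sum_nonneg
    intro i _
    refine mul_nonneg (Finset.sum_nonneg fun l _ => by positivity) (mul_nonneg (hk i).le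
      (mul_nonneg (pow_nonneg (by linarith) _) (Finset.sum_nonneg fun l _ => by positivity)))
  set C := (m : ℝ) * L + 1 with hCdef
  have hC : 0 < C := by
    have : (0:ℝ) ≤ (m : ℝ) * L := mul_nonneg (by positivity) hL
    linarith
  have key : ∀ ε : ℝ, 0 < ε → ∀ t ∈ Set.Icc (0:ℝ) t₀, ∀ j, -(ε * Real.exp (C * t)) < x t j := by
    intro ε hε
    by_contra hcon
    push_neg at hcon
    obtain ⟨t', ht', j', hj'⟩ := hcon
    set S : Fin m → Set ℝ :=
      fun j => Set.Icc (0:ℝ) t₀ ∩ (fun t => x t j + ε * Real.exp (C * t)) ⁻¹' Set.Iic 0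
      with hSdef
    have hSclosed : ∀ j, IsClosed (S j) := by
      intro j
      apply ContinuousOn.preimage_isClosed_of_isClosed _ isClosed_Icc isClosed_Iic
      exact ((continuous_apply j).comp_continuousOn hcont).add
        (Continuous.continuousOn (by continuity))
    have hSbdd : ∀ j, BddBelow (S j) := fun j => ⟨0, fun s hs => hs.1.1⟩
    set F : Finset (Fin m) := Finset.univ.filter (fun j => (S j).Nonempty) with hFdef
    have hF : F.Nonempty := by
      refine ⟨j', Finset.mem_filter.2 ⟨Finset.mem_univ _, ⟨t', ht', ?_⟩⟩⟩
      simp only [Set.mem_preimage, Set.mem_Iic]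
      linarith
    obtain ⟨j₁, hj₁F, hj₁⟩ := F.exists_mem_eq_inf' hF (fun j => sInf (S j))
    set t₁ := F.inf' hF (fun j => sInf (S j)) with ht₁def
    have hSj₁ : (S j₁).Nonempty := (Finset.mem_filter.1 hj₁F).2
    have ht₁mem : t₁ ∈ S j₁ := by
      rw [hj₁]
      exact (hSclosed j₁).csInf_mem hSj₁ (hSbdd j₁)
    have ht₁Icc : t₁ ∈ Set.Icc (0:ℝ) t₀ := ht₁mem.1
    have hval : x t₁ j₁ + ε * Real.exp (C * t₁) ≤ 0 := ht₁mem.2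
    have ht₁pos : 0 < t₁ := by
      rcases lt_or_eq_of_le ht₁Icc.1 with h | h
      · exact h
      · exfalso
        rw [← h, hinit] at hval
        nlinarith [Real.exp_pos (C * (0:ℝ)), hx₀ j₁]
    have hbefore : ∀ s, 0 ≤ s → s < t₁ → ∀ l, 0 < x s l + ε * Real.exp (C * s) := by
      intro s hs0 hst l
      by_contra hle
      push_neg at hle
      have hsS : s ∈ S l := ⟨⟨hs0, le_trans hst.le ht₁Icc.2⟩, hle⟩
      have hlF : l ∈ F := Finset.mem_filter.2 ⟨Finset.mem_univ _, ⟨s, hsS⟩⟩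
      have h1 : t₁ ≤ sInf (S l) := Finset.inf'_le (fun j => sInf (S j)) hlF
      have h2 : sInf (S l) ≤ s := csInf_le (hSbdd l) hsS
      linarith
    -- at t₁, all coordinates are ≥ -ε exp(C t₁)
    have hAt : ∀ l, -(ε * Real.exp (C * t₁)) ≤ x t₁ l := by
      intro l
      have hc1 : ContinuousAt (fun s => x s l) t₁ :=
        (coord_hasDerivAt (hsol t₁ ht₁Icc.1) l).continuousAt
      have hc2 : Continuous (fun s : ℝ => ε * Real.exp (C * s)) :=
        continuous_const.mul (Real.continuous_exp.comp (continuous_const.mul continuous_id))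
      have hcont' : Tendsto (fun s => x s l + ε * Real.exp (C * s)) (nhdsWithin t₁ (Set.Iio t₁))
          (nhds (x t₁ l + ε * Real.exp (C * t₁))) :=
        ((hc1.add hc2.continuousAt)).tendsto.mono_left nhdsWithin_le_nhds
      have hev : ∀ᶠ s in nhdsWithin t₁ (Set.Iio t₁),
          0 ≤ x s l + ε * Real.exp (C * s) := by
        have h1 : Set.Ioi (0:ℝ) ∈ nhdsWithin t₁ (Set.Iio t₁) :=
          nhdsWithin_le_nhds (Ioi_mem_nhds ht₁pos)
        filter_upwards [h1, self_mem_nhdsWithin] with s hs1 hs2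
        exact (hbefore s (le_of_lt hs1) hs2 l).le
      have := ge_of_tendsto hcont' hev
      linarith
    have hNbound : (∑ l, max (-(x t₁ l)) 0) ≤ (m : ℝ) * (ε * Real.exp (C * t₁)) := by
      calc (∑ l, max (-(x t₁ l)) 0) ≤ ∑ _l : Fin m, ε * Real.exp (C * t₁) := by
            refine Finset.sum_le_sum fun l _ => max_le (by linarith [hAt l]) (by positivity)
        _ = (m : ℝ) * (ε * Real.exp (C * t₁)) := by
            rw [Finset.sum_const, Finset.card_univ, Fintype.card_fin, nsmul_eq_mul]
    -- derivative of ψ at t₁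
    have hψ : HasDerivAt (fun s => x s j₁ + ε * Real.exp (C * s))
        ((Gamma a b).mulVec (rate a k (x t₁)) j₁ + ε * (Real.exp (C * t₁) * C)) t₁ := by
      have hx1 := coord_hasDerivAt (hsol t₁ ht₁Icc.1) j₁
      have hexp : HasDerivAt (fun s : ℝ => Real.exp (C * s)) (Real.exp (C * t₁) * C) t₁ := by
        have h1 : HasDerivAt (fun s : ℝ => C * s) C t₁ := by
          simpa using (hasDerivAt_id t₁).const_mul C
        simpa using h1.exp
      exact hx1.add (hexp.const_mul ε)
    -- slope argument: derivative at t₁ is ≤ 0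
    have hd : (Gamma a b).mulVec (rate a k (x t₁)) j₁ + ε * (Real.exp (C * t₁) * C) ≤ 0 := by
      have hslope := hasDerivAt_iff_tendsto_slope.1 hψ
      have hslope' := hslope.mono_left
        (nhdsWithin_mono t₁ (fun s (hs : s ∈ Set.Iio t₁) => ne_of_lt hs))
      refine le_of_tendsto hslope' ?_
      have h1 : Set.Ioi (0:ℝ) ∈ nhdsWithin t₁ (Set.Iio t₁) :=
        nhdsWithin_le_nhds (Ioi_mem_nhds ht₁pos)
      filter_upwards [h1, self_mem_nhdsWithin] with s hs1 hs2
      rw [slope_def_field]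
      have hnum : 0 ≤ (x s j₁ + ε * Real.exp (C * s)) - (x t₁ j₁ + ε * Real.exp (C * t₁)) := by
        have := hbefore s (le_of_lt hs1) hs2 j₁
        linarith
      have hden : s - t₁ < 0 := by simpa [sub_neg] using hs2
      exact div_nonpos_of_nonneg_of_nonpos hnum hden.le
    -- quasipositivity lower bound
    have hq := quasipos a b k hk hρ1 (x t₁) (hρ t₁ ht₁Icc) j₁
      (by nlinarith [mul_pos hε (Real.exp_pos (C * t₁))] : x t₁ j₁ ≤ 0)
    have hqL : -(L * (∑ l, max (-(x t₁ l)) 0)) ≤ (Gamma a b).mulVec (rate a k (x t₁)) j₁ := by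
      rw [hLdef]; exact hq
    have hq2 : -(L * ((m : ℝ) * (ε * Real.exp (C * t₁)))) ≤
        (Gamma a b).mulVec (rate a k (x t₁)) j₁ :=
      le_trans (neg_le_neg (mul_le_mul_of_nonneg_left hNbound hL)) hqL
    have h3 : ε * (Real.exp (C * t₁) * C) =
        (m : ℝ) * L * (ε * Real.exp (C * t₁)) + ε * Real.exp (C * t₁) := by
      rw [hCdef]; ring
    have h4 := mul_pos hε (Real.exp_pos (C * t₁))
    clear_value ρ L C
    linarith [hq2, hd, h3, h4]
  -- conclude nonnegativity
  by_contra hneg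
  push_neg at hneg
  have hex : (0:ℝ) < Real.exp (C * t₀) := Real.exp_pos _
  set ε := (-(x t₀ j₀)) / (2 * Real.exp (C * t₀)) with hεdef
  have hε : 0 < ε := by
    apply div_pos (by linarith) (by linarith)
  have hkey := key ε hε t₀ ⟨ht₀, le_refl _⟩ j₀
  have h5 : ε * Real.exp (C * t₀) = -(x t₀ j₀) / 2 := by
    rw [hεdef]
    field_simp
  rw [h5] at hkey
  linarith

lemma grow {x : ℝ → ℝ} {d : ℝ → ℝ} {u v δ : ℝ} (huv : u ≤ v)
    (hder : ∀ s ∈ Set.Icc u v, HasDerivAt x (d s) s)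
    (hδ : ∀ s ∈ Set.Icc u v, δ ≤ d s) :
    x u + δ * (v - u) ≤ x v := by
  have hg : ∀ s ∈ Set.Icc u v, HasDerivAt (fun s => x s - δ * s) (d s - δ) s := by
    intro s hs
    simpa using (hder s hs).fun_sub ((hasDerivAt_id s).const_mul δ)
  have hmono : MonotoneOn (fun s => x s - δ * s) (Set.Icc u v) := by
    apply monotoneOn_of_deriv_nonneg (convex_Icc u v)
    · exact fun s hs => (hg s hs).continuousAt.continuousWithinAt
    · intro s hs
      exact (hg s (interior_subset hs)).differentiableAt.differentiableWithinAt
    · intro s hs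
      rw [(hg s (interior_subset hs)).deriv]
      linarith [hδ s (interior_subset hs)]
  have h := hmono (Set.left_mem_Icc.2 huv) (Set.right_mem_Icc.2 huv) huv
  simp only at h
  linarith

lemma box_bounds {m r : ℕ} (a b : Fin r → Fin m → ℕ) (k : Fin r → ℝ) (hk : ∀ i, 0 < k i)
    (I : Set (Fin m)) (y : Fin m → ℝ) (hy0 : ∀ l, 0 ≤ y l) (hyI : ∀ l ∈ I, y l = 0)
    (hyP : ∀ l ∉ I, 0 < y l) (j : Fin m) (hj : j ∈ I) (i₀ : Fin r) (hbij : 0 < b i₀ j)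
    (hai : ∀ l ∈ I, a i₀ l = 0) :
    ∃ η δ V : ℝ, 0 < η ∧ η ≤ 1 ∧ 0 < δ ∧ 0 < V ∧
      ∀ z : Fin m → ℝ, (∀ l, 0 ≤ z l) → (∀ l, |z l - y l| ≤ η) →
        (δ ≤ (Gamma a b).mulVec (rate a k z) j ∧
          ∀ l', |(Gamma a b).mulVec (rate a k z) l'| ≤ V) := by
  classical
  set ρ := ‖y‖ + 1 with hρdef
  have hρ1 : (1:ℝ) ≤ ρ := by have := norm_nonneg y; linarith
  have hyρ : ∀ l, y l ≤ ρ - 1 := by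
    intro l
    calc y l ≤ |y l| := le_abs_self _
      _ = ‖y l‖ := rfl
      _ ≤ ‖y‖ := norm_le_pi_norm y l
      _ = ρ - 1 := by rw [hρdef]; ring
  -- constants
  set E : Fin r → ℕ := fun i => ∑ l, a i l with hEdef
  set c : Fin m → ℝ := fun l => if l ∈ I then 1 else min (y l / 2) 1 with hcdef
  have hc0 : ∀ l, 0 < c l := by
    intro l
    rw [hcdef]
    by_cases h : l ∈ I
    · simp [h]
    · simp only [h, if_false]
      exact lt_min (by linarith [hyP l h]) one_pos
  have hc1 : ∀ l, c l ≤ 1 := by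
    intro l
    rw [hcdef]
    by_cases h : l ∈ I
    · simp [h]
    · simp only [h, if_false]
      exact min_le_right _ _
  set δ₀ := k i₀ * ∏ l, c l ^ a i₀ l with hδ₀def
  have hδ₀ : 0 < δ₀ := mul_pos (hk i₀) (Finset.prod_pos fun l _ => pow_pos (hc0 l) _)
  set C₀ := ∑ i, (a i j : ℝ) * k i * ρ ^ E i with hC₀def
  have hC₀ : 0 ≤ C₀ :=
    Finset.sum_nonneg fun i _ => mul_nonneg (mul_nonneg (by positivity) (hk i).le)
      (pow_nonneg (by linarith) _)
  haveI : Nonempty (Fin m) := ⟨j⟩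
  set ymin := Finset.univ.inf' Finset.univ_nonempty
    (fun l => if l ∈ I then 1 else y l / 2) with hymindef
  have hymin : 0 < ymin := by
    rw [hymindef]
    rw [Finset.lt_inf'_iff]
    intro l _
    by_cases h : l ∈ I
    · simp [h]
    · simp only [h, if_false]
      linarith [hyP l h]
  have hyminle : ∀ l, l ∉ I → ymin ≤ y l / 2 := by
    intro l hl
    have := Finset.inf'_le (b := l) (fun l => if l ∈ I then 1 else y l / 2) (Finset.mem_univ l)
    rw [if_neg hl] at this
    exact this
  set η := min 1 (min ymin (δ₀ / (2 * (C₀ + 1)))) with hηdef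
  have hη0 : 0 < η := lt_min one_pos (lt_min hymin (div_pos hδ₀ (by linarith)))
  have hη1 : η ≤ 1 := min_le_left _ _
  have hηymin : η ≤ ymin := le_trans (min_le_right _ _) (min_le_left _ _)
  have hηδ : η ≤ δ₀ / (2 * (C₀ + 1)) := le_trans (min_le_right _ _) (min_le_right _ _)
  set V := (∑ i, (∑ l, ((a i l : ℝ) + b i l)) * (k i * ρ ^ E i)) + 1 with hVdef
  have hVsum : 0 ≤ ∑ i, (∑ l, ((a i l : ℝ) + b i l)) * (k i * ρ ^ E i) :=
    Finset.sum_nonneg fun i _ => mul_nonneg (Finset.sum_nonneg fun l _ => by positivity)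
      (mul_nonneg (hk i).le (pow_nonneg (by linarith) _))
  have hV : 0 < V := by rw [hVdef]; linarith
  refine ⟨η, δ₀ / 2, V, hη0, hη1, half_pos hδ₀, hV, ?_⟩
  intro z hz0 hzy
  have hzρ : ∀ l, |z l| ≤ ρ := by
    intro l
    rw [abs_of_nonneg (hz0 l)]
    linarith [(abs_le.1 (hzy l)).2, hyρ l, hη1]
  have hzj : z j ≤ η := by
    have h1 := (abs_le.1 (hzy j)).2
    rw [hyI j hj] at h1
    linarith
  constructor
  · -- lower bound for coordinate j
    rw [mulVec_rate_apply, ← Finset.add_sum_erase _ _ (Finset.mem_univ i₀)]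
    have hterm₀ : δ₀ ≤ ((b i₀ j : ℝ) - (a i₀ j : ℝ)) * (k i₀ * ∏ l, z l ^ a i₀ l) := by
      have hcoeff : (1:ℝ) ≤ (b i₀ j : ℝ) - (a i₀ j : ℝ) := by
        rw [hai j hj]
        push_cast
        have : (1:ℝ) ≤ (b i₀ j : ℝ) := by exact_mod_cast hbij
        linarith
      have hR : δ₀ ≤ k i₀ * ∏ l, z l ^ a i₀ l := by
        rw [hδ₀def]
        apply mul_le_mul_of_nonneg_left _ (hk i₀).le
        apply Finset.prod_le_prod (fun l _ => pow_nonneg (hc0 l).le _)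
        intro l _
        by_cases hal : a i₀ l = 0
        · rw [hal, pow_zero, pow_zero]
        · have hlI : l ∉ I := fun hIl => hal (hai l hIl)
          have h1 : c l ≤ z l := by
            have h2 : y l - η ≤ z l := by linarith [(abs_le.1 (hzy l)).1]
            have h3 : η ≤ y l / 2 := le_trans hηymin (hyminle l hlI)
            have h4 : c l ≤ y l / 2 := by
              rw [hcdef]
              simp only [hlI, if_false]
              exact min_le_left _ _
            linarith
          exact pow_le_pow_left₀ (hc0 l).le h1 _
      have hRnn : (0:ℝ) ≤ k i₀ * ∏ l, z l ^ a i₀ l := le_trans hδ₀.le hR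
      calc δ₀ ≤ k i₀ * ∏ l, z l ^ a i₀ l := hR
        _ ≤ ((b i₀ j : ℝ) - (a i₀ j : ℝ)) * (k i₀ * ∏ l, z l ^ a i₀ l) :=
            le_mul_of_one_le_left hRnn hcoeff
    have hrest : -(η * C₀) ≤ ∑ i ∈ Finset.univ.erase i₀,
        ((b i j : ℝ) - (a i j : ℝ)) * (k i * ∏ l, z l ^ a i l) := by
      have hper : ∀ i ∈ Finset.univ.erase i₀,
          -((a i j : ℝ) * k i * ρ ^ E i * η) ≤
          ((b i j : ℝ) - (a i j : ℝ)) * (k i * ∏ l, z l ^ a i l) := by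
        intro i _
        by_cases haij0 : a i j = 0
        · rw [haij0]
          push_cast
          have h1 : (0:ℝ) ≤ (b i j : ℝ) * (k i * ∏ l, z l ^ a i l) :=
            mul_nonneg (by positivity) (mul_nonneg (hk i).le
              (Finset.prod_nonneg fun l _ => pow_nonneg (hz0 l) _))
          simpa using h1
        · have hP1 : z j ^ a i j ≤ η := by
            calc z j ^ a i j ≤ z j := pow_le_of_le_one (hz0 j) (le_trans hzj hη1) haij0
              _ ≤ η := hzj
          have hP2 : ∏ l ∈ Finset.univ.erase j, z l ^ a i l ≤ ρ ^ E i := by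
            have h1 := abs_prod_pow_le' hρ1 z hzρ (a i) (Finset.univ.erase j)
            have h2 : ρ ^ (∑ l ∈ Finset.univ.erase j, a i l) ≤ ρ ^ E i := by
              apply pow_le_pow_right₀ hρ1
              rw [hEdef]
              exact Finset.sum_le_sum_of_subset (Finset.erase_subset _ _)
            exact le_trans (le_abs_self _) (le_trans h1 h2)
          have hP : ∏ l, z l ^ a i l ≤ η * ρ ^ E i := by
            rw [← Finset.mul_prod_erase _ _ (Finset.mem_univ j)]
            exact mul_le_mul hP1 hP2
              (Finset.prod_nonneg fun l _ => pow_nonneg (hz0 l) _) hη0.le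
          have hPnn : (0:ℝ) ≤ ∏ l, z l ^ a i l :=
            Finset.prod_nonneg fun l _ => pow_nonneg (hz0 l) _
          have hcoeff : -((a i j : ℝ)) ≤ (b i j : ℝ) - (a i j : ℝ) := by
            have : (0:ℝ) ≤ (b i j : ℝ) := by positivity
            linarith
          calc -((a i j : ℝ) * k i * ρ ^ E i * η)
              = -((a i j : ℝ)) * (k i * (η * ρ ^ E i)) := by ring
            _ ≤ -((a i j : ℝ)) * (k i * ∏ l, z l ^ a i l) := by
                apply mul_le_mul_of_nonpos_left _ (by simp : -((a i j : ℝ)) ≤ 0)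
                exact mul_le_mul_of_nonneg_left hP (hk i).le
            _ ≤ ((b i j : ℝ) - (a i j : ℝ)) * (k i * ∏ l, z l ^ a i l) :=
                mul_le_mul_of_nonneg_right hcoeff (mul_nonneg (hk i).le hPnn)
      have h6 : ∑ i ∈ Finset.univ.erase i₀, (a i j : ℝ) * k i * ρ ^ E i ≤ C₀ := by
        rw [hC₀def]
        apply Finset.sum_le_sum_of_subset_of_nonneg (Finset.erase_subset _ _)
        intro i _ _
        exact mul_nonneg (mul_nonneg (by positivity) (hk i).le) (pow_nonneg (by linarith) _)
      calc -(η * C₀) ≤ -(η * ∑ i ∈ Finset.univ.erase i₀, (a i j : ℝ) * k i * ρ ^ E i) :=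
            neg_le_neg (mul_le_mul_of_nonneg_left h6 hη0.le)
        _ = ∑ i ∈ Finset.univ.erase i₀, -((a i j : ℝ) * k i * ρ ^ E i * η) := by
            rw [Finset.sum_neg_distrib, Finset.mul_sum]
            congr 1
            exact Finset.sum_congr rfl fun i _ => by ring
        _ ≤ _ := Finset.sum_le_sum hper
    have hC₀η : η * C₀ ≤ δ₀ / 2 := by
      calc η * C₀ ≤ (δ₀ / (2 * (C₀ + 1))) * C₀ := mul_le_mul_of_nonneg_right hηδ hC₀
        _ ≤ δ₀ / 2 := by
            rw [div_mul_eq_mul_div, div_le_div_iff₀ (by linarith) (by norm_num)]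
            nlinarith
    linarith
  · -- speed bound
    intro l'
    rw [mulVec_rate_apply]
    refine (Finset.abs_sum_le_sum_abs _ _).trans ?_
    have hper : ∀ i ∈ (Finset.univ : Finset (Fin r)),
        |((b i l' : ℝ) - (a i l' : ℝ)) * (k i * ∏ l, z l ^ a i l)| ≤
        (∑ l, ((a i l : ℝ) + b i l)) * (k i * ρ ^ E i) := by
      intro i _
      rw [abs_mul, abs_mul, abs_of_pos (hk i)]
      have hc : |(b i l' : ℝ) - (a i l' : ℝ)| ≤ ∑ l, ((a i l : ℝ) + b i l) := by
        have h1 : (a i l' : ℝ) + b i l' ≤ ∑ l, ((a i l : ℝ) + b i l) :=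
          Finset.single_le_sum (f := fun l => (a i l : ℝ) + b i l)
            (fun l _ => by positivity) (Finset.mem_univ l')
        rw [abs_le]
        refine ⟨?_, ?_⟩ <;>
          nlinarith [(Nat.cast_nonneg (a i l') : (0:ℝ) ≤ _),
            (Nat.cast_nonneg (b i l') : (0:ℝ) ≤ _)]
      have hPa : |∏ l, z l ^ a i l| ≤ ρ ^ E i := abs_prod_pow_le' hρ1 z hzρ (a i) Finset.univ
      exact mul_le_mul hc (mul_le_mul_of_nonneg_left hPa (hk i).le)
        (mul_nonneg (hk i).le (abs_nonneg _)) (Finset.sum_nonneg fun l _ => by positivity)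
    calc ∑ i, |((b i l' : ℝ) - (a i l' : ℝ)) * (k i * ∏ l, z l ^ a i l)|
        ≤ ∑ i, (∑ l, ((a i l : ℝ) + b i l)) * (k i * ρ ^ E i) := Finset.sum_le_sum hper
      _ ≤ V := by rw [hVdef]; linarith

set_option maxHeartbeats 1000000 in
/-- if the ω-limit set of a forward solution from a positive initial condition
meets `L_I`, then `I` is a semi-locking set. -/
theorem stmt1 {m r : ℕ} (a b : Fin r → Fin m → ℕ) (k : Fin r → ℝ) (hk : ∀ i, 0 < k i)
    (I : Set (Fin m)) (hInonempty : I.Nonempty)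
    (x₀ : Fin m → ℝ) (hx₀ : ∀ i, 0 < x₀ i) (x : ℝ → Fin m → ℝ) (hinit : x 0 = x₀)
    (hsol : IsForwardSolution a b k x)
    (hω : (omegaLimitSet x ∩ LI I).Nonempty) :
    IsSemiLocking a b I := by
  classical
  obtain ⟨y, hyω, hyL⟩ := hω
  obtain ⟨hy0, hyI, hyP⟩ := hyL
  refine ⟨hInonempty, fun i₀ hex => ?_⟩
  obtain ⟨j, hjI, hbij⟩ := hex
  by_contra hno
  push_neg at hno
  have hai : ∀ l ∈ I, a i₀ l = 0 := fun l hl => Nat.le_zero.1 (hno l hl)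
  obtain ⟨η, δ, V, hη0, hη1, hδ0, hV0, hbox⟩ :=
    box_bounds a b k hk I y hy0 hyI hyP j hjI i₀ hbij hai
  have hinv := invariance a b k hk x₀ hx₀ x hinit hsol
  have hclu : ∀ ε : ℝ, 0 < ε → ∀ T : ℝ, ∃ t ≥ T, ∀ l, |x t l - y l| < ε := by
    intro ε hε T
    have h1 := (mapClusterPt_iff_frequently.1 hyω) (Metric.ball y ε) (Metric.ball_mem_nhds y hε)
    obtain ⟨t, ht, h2⟩ := Filter.frequently_atTop.1 h1 T
    refine ⟨t, ht, fun l => ?_⟩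
    calc |x t l - y l| = dist (x t l) (y l) := (Real.dist_eq _ _).symm
      _ ≤ dist (x t) y := dist_le_pi_dist _ _ l
      _ < ε := h2
  set γ := δ * (η / (2 * V)) with hγdef
  have hγ0 : 0 < γ := by positivity
  set η' := min (η / 2) (γ / 2) with hη'def
  have hη'0 : 0 < η' := lt_min (by linarith) (by linarith)
  have hη'η : η' ≤ η / 2 := min_le_left _ _
  have hη'γ : η' ≤ γ / 2 := min_le_right _ _
  by_cases hcase : ∃ t', 0 ≤ t' ∧ ∃ l, η < |x t' l - y l|
  · obtain ⟨t', ht'0, l₀, hfar⟩ := hcase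
    obtain ⟨t₂, ht₂, hnear⟩ := hclu η' hη'0 t'
    have hcontc : ∀ (l : Fin m) (s : ℝ), 0 ≤ s → ContinuousAt (fun τ => |x τ l - y l|) s :=
      fun l s hs => ((coord_hasDerivAt (hsol s hs) l).continuousAt.sub continuousAt_const).abs
    set A := ⋃ l, (Set.Icc t' t₂ ∩ (fun s => |x s l - y l|) ⁻¹' Set.Ici η) with hAdef
    have hAclosed : IsClosed A := by
      apply isClosed_iUnion_of_finite
      intro l
      apply ContinuousOn.preimage_isClosed_of_isClosed _ isClosed_Icc isClosed_Ici
      exact fun s hs => (hcontc l s (le_trans ht'0 hs.1)).continuousWithinAt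
    have hAne : A.Nonempty :=
      ⟨t', Set.mem_iUnion.2 ⟨l₀, ⟨Set.left_mem_Icc.2 ht₂, le_of_lt hfar⟩⟩⟩
    have hAbdd : BddAbove A := by
      refine ⟨t₂, fun s hs => ?_⟩
      obtain ⟨l, hl⟩ := Set.mem_iUnion.1 hs
      exact hl.1.2
    set u := sSup A with hudef
    have huA : u ∈ A := hAclosed.csSup_mem hAne hAbdd
    obtain ⟨l₁, hl₁⟩ := Set.mem_iUnion.1 huA
    have huIcc : u ∈ Set.Icc t' t₂ := hl₁.1
    have hul₁ : η ≤ |x u l₁ - y l₁| := hl₁.2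
    have hu0 : 0 ≤ u := le_trans ht'0 huIcc.1
    have hult₂ : u < t₂ := by
      rcases lt_or_eq_of_le huIcc.2 with h | h
      · exact h
      · exfalso
        rw [h] at hul₁
        have := hnear l₁
        linarith
    have hboxs : ∀ s, u < s → s ≤ t₂ → ∀ l, |x s l - y l| ≤ η := by
      intro s hus hst l
      by_contra hgt
      push_neg at hgt
      have hsA : s ∈ A := Set.mem_iUnion.2
        ⟨l, ⟨⟨le_trans huIcc.1 hus.le, hst⟩, le_of_lt hgt⟩⟩
      have := le_csSup hAbdd hsA
      linarith
    have hboxu : ∀ l, |x u l - y l| ≤ η := by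
      intro l
      have hct : Filter.Tendsto (fun s => |x s l - y l|) (nhdsWithin u (Set.Ioi u))
          (nhds |x u l - y l|) :=
        (hcontc l u hu0).tendsto.mono_left nhdsWithin_le_nhds
      refine le_of_tendsto hct ?_
      have h1 : Set.Iio t₂ ∈ nhdsWithin u (Set.Ioi u) :=
        nhdsWithin_le_nhds (Iio_mem_nhds hult₂)
      filter_upwards [h1, self_mem_nhdsWithin] with s hs1 hs2
      exact hboxs s hs2 (le_of_lt hs1) l
    have hboxI : ∀ s ∈ Set.Icc u t₂, ∀ l, |x s l - y l| ≤ η := by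
      intro s hs l
      rcases eq_or_lt_of_le hs.1 with h | h
      · rw [← h]; exact hboxu l
      · exact hboxs s h hs.2 l
    have hs0 : ∀ s ∈ Set.Icc u t₂, (0:ℝ) ≤ s := fun s hs => le_trans hu0 hs.1
    have hderiv : ∀ s ∈ Set.Icc u t₂,
        HasDerivAt (fun τ => x τ j) ((Gamma a b).mulVec (rate a k (x s)) j) s :=
      fun s hs => coord_hasDerivAt (hsol s (hs0 s hs)) j
    have hlow : ∀ s ∈ Set.Icc u t₂, δ ≤ (Gamma a b).mulVec (rate a k (x s)) j :=
      fun s hs => (hbox (x s) (fun l => hinv s (hs0 s hs) l) (hboxI s hs)).1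
    have hgrow := grow hult₂.le hderiv hlow
    have hspeed : ‖x t₂ - x u‖ ≤ V * ‖t₂ - u‖ := by
      apply Convex.norm_image_sub_le_of_norm_hasDerivWithin_le
        (fun s hs => (hsol s (hs0 s hs)).hasDerivWithinAt)
        (fun s hs => ?_) (convex_Icc u t₂)
        (Set.left_mem_Icc.2 hult₂.le) (Set.right_mem_Icc.2 hult₂.le)
      rw [pi_norm_le_iff_of_nonneg hV0.le]
      intro l'
      rw [Real.norm_eq_abs]
      exact (hbox (x s) (fun l => hinv s (hs0 s hs) l) (hboxI s hs)).2 l'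
    have htri : η - η' ≤ ‖x t₂ - x u‖ := by
      have h1 : |x u l₁ - x t₂ l₁| + |x t₂ l₁ - y l₁| ≥ η := by
        calc η ≤ |x u l₁ - y l₁| := hul₁
          _ ≤ |x u l₁ - x t₂ l₁| + |x t₂ l₁ - y l₁| := abs_sub_le _ _ _
      have h2 : |x u l₁ - x t₂ l₁| ≤ ‖x t₂ - x u‖ := by
        rw [abs_sub_comm]
        calc |x t₂ l₁ - x u l₁| = ‖(x t₂ - x u) l₁‖ := by rw [Real.norm_eq_abs]; rfl
          _ ≤ ‖x t₂ - x u‖ := norm_le_pi_norm _ l₁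
      linarith [hnear l₁]
    have hVt : η / 2 ≤ V * (t₂ - u) := by
      have h3 : ‖t₂ - u‖ = t₂ - u := by
        rw [Real.norm_eq_abs, abs_of_nonneg (by linarith)]
      rw [h3] at hspeed
      linarith
    have hfin1 : γ ≤ δ * (t₂ - u) := by
      rw [hγdef]
      apply mul_le_mul_of_nonneg_left _ hδ0.le
      rw [div_le_iff₀ (by linarith : (0:ℝ) < 2 * V)]
      nlinarith
    have hxu : 0 ≤ x u j := hinv u hu0 j
    have hxt₂ : x t₂ j < η' := by
      have h1 := hnear j
      rw [hyI j hjI, sub_zero] at h1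
      exact lt_of_le_of_lt (le_abs_self _) h1
    linarith
  · push_neg at hcase
    set T := (η + 1) / δ with hTdef
    have hT0 : (0:ℝ) ≤ T := by positivity
    have hs0 : ∀ s ∈ Set.Icc (0:ℝ) T, (0:ℝ) ≤ s := fun s hs => hs.1
    have hderiv : ∀ s ∈ Set.Icc (0:ℝ) T,
        HasDerivAt (fun τ => x τ j) ((Gamma a b).mulVec (rate a k (x s)) j) s :=
      fun s hs => coord_hasDerivAt (hsol s hs.1) j
    have hlow : ∀ s ∈ Set.Icc (0:ℝ) T, δ ≤ (Gamma a b).mulVec (rate a k (x s)) j :=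
      fun s hs => (hbox (x s) (fun l => hinv s hs.1 l) (hcase s hs.1)).1
    have hgrow := grow hT0 hderiv hlow
    have hδT : δ * (T - 0) = η + 1 := by
      rw [hTdef]
      field_simp
      ring
    have hx0j : 0 < x 0 j := by rw [hinit]; exact hx₀ j
    have hxTj : x T j ≤ η := by
      have h1 := hcase T hT0 j
      rw [hyI j hjI, sub_zero] at h1
      exact le_trans (le_abs_self _) h1
    linarith
end

section
/- Let I ⊆ {1,…,m} be a semi-locking set of a mass-action system and suppose R_i ≼_I R_j, i.e. α_{ik} ≥ α_{jk} for all k ∈ I with strict inequality for at least one k ∈ I. Then for every ε > 0 and every compact subset K of L_I, there exists a neighbourhood U of K in ℝ^m_{≥0} such that R_i(x) ≤ ε R_j(x) for all x ∈ U. -/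
open scoped BigOperators
open Matrix Filter

/-- if `I` is a semi-locking set and `R_i ≼_I R_j`, then for every `ε > 0` and
every compact `K ⊆ L_I` there is a neighbourhood `U` of `K` in `ℝ^m_{≥0}` on which
`R_i(x) ≤ ε R_j(x)`. -/
theorem stmt2 {m r : ℕ} (a b : Fin r → Fin m → ℕ) (k : Fin r → ℝ) (hk : ∀ i, 0 < k i)
    (I : Set (Fin m)) (hI : IsSemiLocking a b I) (i j : Fin r) (hij : prec a I i j)
    (ε : ℝ) (hε : 0 < ε) (K : Set (Fin m → ℝ)) (hK : IsCompact K) (hKL : K ⊆ LI I) :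
    ∃ U : Set (Fin m → ℝ), IsOpen U ∧ K ⊆ U ∧
      ∀ x ∈ U, (∀ l, 0 ≤ x l) → rate a k x i ≤ ε * rate a k x j := by
    classical
  obtain ⟨hle, l₀, hl₀I, hl₀⟩ := hij
  have key : ∀ z ∈ LI I, ∃ U : Set (Fin m → ℝ), IsOpen U ∧ z ∈ U ∧
      ∀ x ∈ U, (∀ l, 0 ≤ x l) → rate a k x i ≤ ε * rate a k x j := by
    intro z hz
    obtain ⟨hz0, hzI, hzpos⟩ := hz
    set M : Fin m → ℝ := fun l => (2 * z l) ^ (a i l) * (2 / z l) ^ (a j l) with hM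
    have hM0 : ∀ l, 0 ≤ M l := by
      intro l
      have : 0 ≤ z l := hz0 l
      positivity
    set P : ℝ := ∏ l, max 1 (M l) with hP
    have hP1 : (1:ℝ) ≤ P := by
      rw [hP]
      calc (1:ℝ) = ∏ _l : Fin m, 1 := by simp
        _ ≤ ∏ l, max 1 (M l) :=
          Finset.prod_le_prod (fun _ _ => zero_le_one) (fun l _ => le_max_left _ _)
    have hP0 : (0:ℝ) < P := lt_of_lt_of_le one_pos hP1
    set δ : ℝ := min 1 (ε * k j / (k i * P)) with hδ
    have hki := hk i
    have hkj := hk j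
    have hδ0 : 0 < δ := lt_min one_pos (by positivity)
    have hδ1 : δ ≤ 1 := min_le_left _ _
    set S : Fin m → Set ℝ := fun l => if l ∈ I then Set.Iio δ else Set.Ioo (z l / 2) (2 * z l)
      with hS
    refine ⟨Set.pi Set.univ S, isOpen_set_pi Set.finite_univ ?_, ?_, ?_⟩
    · intro l _
      by_cases hl : l ∈ I <;> simp [hS, hl, isOpen_Iio, isOpen_Ioo]
    · intro l _
      by_cases hl : l ∈ I
      · simpa [hS, hl, hzI l hl] using hδ0
      · have := hzpos l hl
        simp only [hS, hl, if_false, Set.mem_Ioo]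
        constructor <;> linarith
    · intro x hx hx0
      set c : Fin m → ℝ := fun l => if l = l₀ then δ else if l ∈ I then 1 else M l with hc
      have hc0 : ∀ l, 0 ≤ c l := by
        intro l
        simp only [hc]
        split
        · exact hδ0.le
        · split
          · exact zero_le_one
          · exact hM0 l
      have hterm : ∀ l, x l ^ (a i l) ≤ c l * x l ^ (a j l) := by
        intro l
        by_cases hlI : l ∈ I
        · have hxl : x l < δ := by
            have := hx l (Set.mem_univ l)
            simpa [hS, hlI] using this
          have hxl1 : x l ≤ 1 := le_trans hxl.le hδ1
          by_cases hll : l = l₀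
          · subst hll
            have h1 : x l ^ (a i l) ≤ x l ^ (a j l + 1) :=
              pow_le_pow_of_le_one (hx0 l) hxl1 hl₀
            have h2 : x l ^ (a j l + 1) = x l * x l ^ (a j l) := by ring
            have h3 : x l * x l ^ (a j l) ≤ δ * x l ^ (a j l) :=
              mul_le_mul_of_nonneg_right hxl.le (pow_nonneg (hx0 l) _)
            simp only [hc, if_pos rfl]
            linarith
          · have h1 : x l ^ (a i l) ≤ x l ^ (a j l) :=
              pow_le_pow_of_le_one (hx0 l) hxl1 (hle l hlI)
            simp only [hc, if_neg hll, if_pos hlI]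
            linarith
        · have hxl : z l / 2 < x l ∧ x l < 2 * z l := by
            have := hx l (Set.mem_univ l)
            simpa [hS, hlI] using this
          have hzl : 0 < z l := hzpos l hlI
          have h1 : x l ^ (a i l) ≤ (2 * z l) ^ (a i l) :=
            pow_le_pow_left₀ (hx0 l) hxl.2.le _
          have h2 : (z l / 2) ^ (a j l) ≤ x l ^ (a j l) :=
            pow_le_pow_left₀ (by positivity) hxl.1.le _
          have h3 : (2 * z l) ^ (a i l) = M l * (z l / 2) ^ (a j l) := by
            have hne : z l ≠ 0 := hzl.ne'
            simp only [hM]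
            rw [mul_assoc, ← mul_pow]
            field_simp
            simp
          have h4 : M l * (z l / 2) ^ (a j l) ≤ M l * x l ^ (a j l) :=
            mul_le_mul_of_nonneg_left h2 (hM0 l)
          have hne : l ≠ l₀ := fun h => hlI (h ▸ hl₀I)
          simp only [hc, if_neg hne, if_neg hlI]
          linarith
      have hprod : ∏ l, x l ^ (a i l) ≤ ∏ l, (c l * x l ^ (a j l)) :=
        Finset.prod_le_prod (fun l _ => pow_nonneg (hx0 l) _) (fun l _ => hterm l)
      have hsplit : ∏ l, (c l * x l ^ (a j l)) = (∏ l, c l) * ∏ l, x l ^ (a j l) :=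
        Finset.prod_mul_distrib
      have hcprod : ∏ l, c l ≤ δ * P := by
        rw [← Finset.mul_prod_erase Finset.univ c (Finset.mem_univ l₀)]
        have hcl₀ : c l₀ = δ := by simp [hc]
        rw [hcl₀]
        apply mul_le_mul_of_nonneg_left _ hδ0.le
        calc ∏ l ∈ Finset.univ.erase l₀, c l
            ≤ ∏ l ∈ Finset.univ.erase l₀, max 1 (M l) := by
              apply Finset.prod_le_prod (fun l _ => hc0 l)
              intro l _
              simp only [hc]
              split
              · exact le_trans hδ1 (le_max_left _ _)
              · split
                · exact le_max_left _ _
                · exact le_max_right _ _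
          _ ≤ P := by
              rw [hP, ← Finset.mul_prod_erase Finset.univ _ (Finset.mem_univ l₀)]
              exact le_mul_of_one_le_left
                (Finset.prod_nonneg fun l _ => le_trans zero_le_one (le_max_left _ _))
                (le_max_left _ _)
      have hxj0 : 0 ≤ ∏ l, x l ^ (a j l) :=
        Finset.prod_nonneg (fun l _ => pow_nonneg (hx0 l) _)
      have hkey : k i * (δ * P) ≤ ε * k j := by
        have hδle : δ ≤ ε * k j / (k i * P) := min_le_right _ _
        rw [div_eq_mul_inv] at hδle
        have := mul_le_mul_of_nonneg_right hδle (by positivity : (0:ℝ) ≤ k i * P)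
        rw [mul_assoc, inv_mul_cancel₀ (by positivity : k i * P ≠ 0), mul_one] at this
        nlinarith
      have : rate a k x i ≤ k i * ((δ * P) * ∏ l, x l ^ (a j l)) := by
        unfold rate
        have h1 : ∏ l, x l ^ (a i l) ≤ (δ * P) * ∏ l, x l ^ (a j l) := by
          refine le_trans hprod ?_
          rw [hsplit]
          exact mul_le_mul_of_nonneg_right hcprod hxj0
        exact mul_le_mul_of_nonneg_left h1 hki.le
      refine le_trans this ?_
      unfold rate
      calc k i * ((δ * P) * ∏ l, x l ^ (a j l)) = (k i * (δ * P)) * ∏ l, x l ^ (a j l) := by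
            ring
        _ ≤ (ε * k j) * ∏ l, x l ^ (a j l) := mul_le_mul_of_nonneg_right hkey hxj0
        _ = ε * (k j * ∏ l, x l ^ (a j l)) := by ring
  have hKe := fun z : K => key z (hKL z.2)
  choose U hUo hUm hUp using hKe
  refine ⟨⋃ z : K, U z, isOpen_iUnion hUo, ?_, ?_⟩
  · intro x hx
    exact Set.mem_iUnion.2 ⟨⟨x, hx⟩, hUm ⟨x, hx⟩⟩
  · intro x hx hx0
    obtain ⟨z, hz⟩ := Set.mem_iUnion.1 hx
    exact hUp z x hz hx0
end

section
/- Consider a conservative mass-action system in which every semi-locking set contains the support of a semi-conservation vector. Then the system is persistent: for every x₀ ∈ ℝ^m_{>0}, the ω-limit set ω(x₀) of the forward solution of ẋ = Γ R(x) with x(0) = x₀ satisfies ω(x₀) ∩ ∂ℝ^m_{>0} = ∅. -/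
open scoped BigOperators
open Matrix Filter

/-- Monotonicity workhorse. -/
lemma mono_aux {f g : ℝ → ℝ} {A B : ℝ}
    (hf : ∀ s ∈ Set.Icc A B, HasDerivAt f (g s) s)
    (hg : ∀ s ∈ Set.Icc A B, 0 ≤ g s) :
    ∀ ⦃s⦄, s ∈ Set.Icc A B → ∀ ⦃t⦄, t ∈ Set.Icc A B → s ≤ t → f s ≤ f t := by
  intro s hs t ht hst
  have hmono : MonotoneOn f (Set.Icc A B) := by
    apply monotoneOn_of_deriv_nonneg (convex_Icc A B)
    · exact fun u hu => ((hf u hu).continuousAt).continuousWithinAt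
    · intro u hu
      rw [interior_Icc] at hu
      exact ((hf u (Set.mem_Icc_of_Ioo hu)).differentiableAt).differentiableWithinAt
    · intro u hu
      rw [interior_Icc] at hu
      rw [(hf u (Set.mem_Icc_of_Ioo hu)).deriv]
      exact hg u (Set.mem_Icc_of_Ioo hu)
  exact hmono hs ht hst

lemma hasDerivAt_coord {m : ℕ} {x : ℝ → Fin m → ℝ} {v : Fin m → ℝ} {t : ℝ}
    (h : HasDerivAt x v t) (l : Fin m) :
    HasDerivAt (fun s => x s l) (v l) t := hasDerivAt_pi.1 h l

lemma hasDerivAt_dot {m : ℕ} (c : Fin m → ℝ) {x : ℝ → Fin m → ℝ} {v : Fin m → ℝ} {t : ℝ}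
    (h : HasDerivAt x v t) :
    HasDerivAt (fun s => dotProduct c (x s)) (dotProduct c v) t := by
  simp only [dotProduct]
  exact HasDerivAt.fun_sum fun l _ => (hasDerivAt_coord h l).const_mul (c l)

lemma linConst {m r : ℕ} {a b : Fin r → Fin m → ℕ} {k : Fin r → ℝ}
    {x : ℝ → Fin m → ℝ} (c : Fin m → ℝ)
    (hcΓ : Matrix.vecMul c (Gamma a b) = 0)
    (hsol : ∀ t : ℝ, 0 ≤ t → HasDerivAt x ((Gamma a b).mulVec (rate a k (x t))) t) :
    ∀ t, 0 ≤ t → dotProduct c (x t) = dotProduct c (x 0) := by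
  intro t ht
  have hd : ∀ s ∈ Set.Icc (0:ℝ) t,
      HasDerivAt (fun u => dotProduct c (x u)) 0 s := by
    intro s hs
    have h0 : dotProduct c ((Gamma a b).mulVec (rate a k (x s))) = 0 := by
      rw [dotProduct_mulVec, hcΓ, zero_dotProduct]
    exact h0 ▸ hasDerivAt_dot c (hsol s hs.1)
  have h1 := mono_aux hd (fun s _ => le_refl 0) (Set.left_mem_Icc.2 ht)
      (Set.right_mem_Icc.2 ht) ht
  have h2 := mono_aux (f := fun u => -(dotProduct c (x u))) (g := fun _ => 0)
      (fun s hs => ((hd s hs).neg).congr_deriv (by simp))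
      (fun s _ => le_refl 0) (Set.left_mem_Icc.2 ht) (Set.right_mem_Icc.2 ht) ht
  simp at h2
  linarith


lemma rate_nonneg {m r : ℕ} (a : Fin r → Fin m → ℕ) (k : Fin r → ℝ) (z : Fin m → ℝ)
    (hk : ∀ i, 0 ≤ k i) (hz : ∀ l, 0 ≤ z l) (i : Fin r) : 0 ≤ rate a k z i :=
  mul_nonneg (hk i) (Finset.prod_nonneg fun l _ => pow_nonneg (hz l) _)

lemma prod_pow_le {m : ℕ} (z : Fin m → ℝ) (M : ℝ) (e : Fin m → ℕ) (s : Finset (Fin m))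
    (hz : ∀ l, 0 ≤ z l) (hzM : ∀ l, z l ≤ M) :
    ∏ l ∈ s, z l ^ e l ≤ M ^ (∑ l ∈ s, e l) := by
  rw [← Finset.prod_pow_eq_pow_sum]
  exact Finset.prod_le_prod (fun l _ => pow_nonneg (hz l) _)
    (fun l _ => pow_le_pow_left₀ (hz l) (hzM l) _)

lemma rate_le {m r : ℕ} (a : Fin r → Fin m → ℕ) (k : Fin r → ℝ) (z : Fin m → ℝ) (M : ℝ)
    (hk : ∀ i, 0 ≤ k i) (hz : ∀ l, 0 ≤ z l) (hzM : ∀ l, z l ≤ M) (i : Fin r) :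
    rate a k z i ≤ k i * M ^ (∑ l, a i l) :=
  mul_le_mul_of_nonneg_left (prod_pow_le z M (a i) Finset.univ hz hzM) (hk i)

lemma rate_le_lin {m r : ℕ} (a : Fin r → Fin m → ℕ) (k : Fin r → ℝ) (z : Fin m → ℝ) (M : ℝ)
    (hk : ∀ i, 0 ≤ k i) (hz : ∀ l, 0 ≤ z l) (hzM : ∀ l, z l ≤ M) (hM : 1 ≤ M)
    (i : Fin r) (j : Fin m) (hij : 1 ≤ a i j) :
    rate a k z i ≤ (k i * M ^ (∑ l, a i l)) * z j := by
  have hsplit : ∏ l, z l ^ a i l = z j ^ a i j * ∏ l ∈ Finset.univ.erase j, z l ^ a i l :=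
    (Finset.mul_prod_erase Finset.univ _ (Finset.mem_univ j)).symm
  have h1 : z j ^ a i j ≤ z j * M ^ (a i j - 1) := by
    obtain ⟨n, hn⟩ : ∃ n, a i j = n + 1 := ⟨a i j - 1, by omega⟩
    rw [hn]
    simp only [Nat.add_sub_cancel, pow_succ']
    exact mul_le_mul_of_nonneg_left (pow_le_pow_left₀ (hz j) (hzM j) n) (hz j)
  have h2 : ∏ l ∈ Finset.univ.erase j, z l ^ a i l ≤ M ^ (∑ l ∈ Finset.univ.erase j, a i l) :=
    prod_pow_le z M (a i) _ hz hzM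
  have hM0 : (0:ℝ) ≤ M := le_trans zero_le_one hM
  have h3 : ∏ l, z l ^ a i l ≤ z j * (M ^ (a i j - 1) * M ^ (∑ l ∈ Finset.univ.erase j, a i l)) := by
    rw [hsplit]
    calc z j ^ a i j * ∏ l ∈ Finset.univ.erase j, z l ^ a i l
        ≤ (z j * M ^ (a i j - 1)) * (M ^ (∑ l ∈ Finset.univ.erase j, a i l)) := by
          apply mul_le_mul h1 h2 (Finset.prod_nonneg fun l _ => pow_nonneg (hz l) _)
          exact mul_nonneg (hz j) (pow_nonneg hM0 _)
      _ = z j * (M ^ (a i j - 1) * M ^ (∑ l ∈ Finset.univ.erase j, a i l)) := by ring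
  have h4 : M ^ (a i j - 1) * M ^ (∑ l ∈ Finset.univ.erase j, a i l) ≤ M ^ (∑ l, a i l) := by
    rw [← pow_add]
    apply pow_le_pow_right₀ hM
    have : ∑ l, a i l = a i j + ∑ l ∈ Finset.univ.erase j, a i l :=
      (Finset.add_sum_erase Finset.univ _ (Finset.mem_univ j)).symm
    omega
  calc rate a k z i ≤ k i * (z j * (M ^ (a i j - 1) * M ^ (∑ l ∈ Finset.univ.erase j, a i l))) :=
        mul_le_mul_of_nonneg_left h3 (hk i)
    _ ≤ k i * (z j * M ^ (∑ l, a i l)) := by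
        apply mul_le_mul_of_nonneg_left _ (hk i)
        exact mul_le_mul_of_nonneg_left h4 (hz j)
    _ = (k i * M ^ (∑ l, a i l)) * z j := by ring

/-- Positivity of trajectories for conservative mass-action systems. -/
lemma pos_aux {m r : ℕ} [Nonempty (Fin m)] (a b : Fin r → Fin m → ℕ) (k : Fin r → ℝ)
    (hk : ∀ i, 0 < k i) (cp : Fin m → ℝ) (hcp : ∀ l, 0 < cp l)
    (hcpΓ : Matrix.vecMul cp (Gamma a b) = 0)
    (x : ℝ → Fin m → ℝ)
    (hsol : ∀ t : ℝ, 0 ≤ t → HasDerivAt x ((Gamma a b).mulVec (rate a k (x t))) t)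
    (hx0 : ∀ l, 0 < x 0 l) :
    ∀ t, 0 ≤ t → ∀ j, 0 < x t j := by
  classical
  set q : ℝ := dotProduct cp (x 0) with hq
  have hq0 : 0 ≤ q :=
    Finset.sum_nonneg fun l _ => le_of_lt (mul_pos (hcp l) (hx0 l))
  set cmin : ℝ := Finset.univ.inf' Finset.univ_nonempty cp with hcmin
  have hcmin0 : 0 < cmin := by
    rw [hcmin]
    apply Finset.lt_inf'_iff .. |>.2
    exact fun l _ => hcp l
  set M : ℝ := max 1 (q / cmin) with hM
  have hM1 : (1:ℝ) ≤ M := le_max_left _ _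
  have hM0 : (0:ℝ) ≤ M := le_trans zero_le_one hM1
  -- key Gronwall claim
  have claim : ∀ T, 0 ≤ T → (∀ s ∈ Set.Icc (0:ℝ) T, ∀ l, 0 ≤ x s l) → ∀ j, 0 < x T j := by
    intro T hT hpos j
    -- uniform bound on the trajectory on [0,T]
    have hbd : ∀ s ∈ Set.Icc (0:ℝ) T, ∀ l, x s l ≤ M := by
      intro s hs l
      have hconst := linConst cp hcpΓ hsol s hs.1
      have h1 : cp l * x s l ≤ dotProduct cp (x s) := by
        unfold dotProduct
        exact Finset.single_le_sum
          (fun l' _ => mul_nonneg (le_of_lt (hcp l')) (hpos s hs l')) (Finset.mem_univ l)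
      rw [hconst] at h1
      have h2 : x s l ≤ q / cp l := (le_div_iff₀ (hcp l)).2 (by rw [mul_comm]; exact h1)
      have h3 : q / cp l ≤ q / cmin :=
        div_le_div_of_nonneg_left hq0 hcmin0 (Finset.inf'_le _ (Finset.mem_univ l))
      calc x s l ≤ q / cmin := le_trans h2 h3
        _ ≤ M := le_max_right _ _
    set C : ℝ := 1 + ∑ i, (a i j : ℝ) * (k i * M ^ (∑ l, a i l)) with hC
    -- lower bound on derivative of coordinate j
    have hvlb : ∀ s ∈ Set.Icc (0:ℝ) T,
        -(C * x s j) ≤ (Gamma a b).mulVec (rate a k (x s)) j := by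
      intro s hs
      have hrn : ∀ i, 0 ≤ rate a k (x s) i :=
        rate_nonneg a k (x s) (fun i => le_of_lt (hk i)) (hpos s hs)
      have hxj : 0 ≤ x s j := hpos s hs j
      have step : ∀ i, -(((a i j : ℝ) * (k i * M ^ (∑ l, a i l))) * x s j)
          ≤ Gamma a b j i * rate a k (x s) i := by
        intro i
        have hGa : Gamma a b j i = (b i j : ℝ) - (a i j : ℝ) := rfl
        by_cases hz : a i j = 0
        · rw [hGa, hz]
          simp
          exact mul_nonneg (Nat.cast_nonneg _) (hrn i)
        · have h1 : rate a k (x s) i ≤ (k i * M ^ (∑ l, a i l)) * x s j :=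
            rate_le_lin a k (x s) M (fun i => le_of_lt (hk i)) (hpos s hs)
              (hbd s hs) hM1 i j (by omega)
          have h2 : (a i j : ℝ) * rate a k (x s) i
              ≤ (a i j : ℝ) * ((k i * M ^ (∑ l, a i l)) * x s j) :=
            mul_le_mul_of_nonneg_left h1 (by positivity)
          have h3 : (0:ℝ) ≤ (b i j : ℝ) * rate a k (x s) i :=
            mul_nonneg (by positivity) (hrn i)
          rw [hGa]
          nlinarith
      have hsum : ∑ i, -(((a i j : ℝ) * (k i * M ^ (∑ l, a i l))) * x s j)
          ≤ ∑ i, Gamma a b j i * rate a k (x s) i :=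
        Finset.sum_le_sum fun i _ => step i
      have hlhs : ∑ i, -(((a i j : ℝ) * (k i * M ^ (∑ l, a i l))) * x s j)
          = -((∑ i, (a i j : ℝ) * (k i * M ^ (∑ l, a i l))) * x s j) := by
        simp [Finset.sum_mul]
      have hrhs : (Gamma a b).mulVec (rate a k (x s)) j
          = ∑ i, Gamma a b j i * rate a k (x s) i := rfl
      rw [hrhs]
      refine le_trans ?_ hsum
      rw [hlhs]
      apply neg_le_neg
      apply mul_le_mul_of_nonneg_right _ hxj
      rw [hC]
      linarith
    -- the function exp(Cs) x_j(s) is monotone on [0,T]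
    have hmono := mono_aux (f := fun s => Real.exp (C * s) * x s j)
        (g := fun s => (Real.exp (C * s) * C) * x s j
            + Real.exp (C * s) * ((Gamma a b).mulVec (rate a k (x s)) j))
        (A := 0) (B := T) ?hd ?hg
    case hd =>
      intro s hs
      have hexp : HasDerivAt (fun u => Real.exp (C * u)) (Real.exp (C * s) * C) s := by
        have h1 : HasDerivAt (fun u : ℝ => C * u) C s := by
          simpa using (hasDerivAt_id s).const_mul C
        exact (Real.hasDerivAt_exp (C * s)).comp s h1
      exact hexp.mul (hasDerivAt_coord (hsol s hs.1) j)
    case hg =>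
      intro s hs
      have he : 0 < Real.exp (C * s) := Real.exp_pos _
      have h1 := hvlb s hs
      have h2 := hpos s hs j
      show 0 ≤ (Real.exp (C * s) * C) * x s j
          + Real.exp (C * s) * ((Gamma a b).mulVec (rate a k (x s)) j)
      nlinarith [mul_le_mul_of_nonneg_left h1 he.le]
    have hT0 : (0:ℝ) ∈ Set.Icc (0:ℝ) T := Set.left_mem_Icc.2 hT
    have hTT : T ∈ Set.Icc (0:ℝ) T := Set.right_mem_Icc.2 hT
    have := hmono hT0 hTT hT
    simp only [mul_zero, Real.exp_zero, one_mul] at this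
    have he : 0 < Real.exp (C * T) := Real.exp_pos _
    nlinarith [hx0 j]
  -- bootstrap: positivity propagates
  intro t0 ht0
  by_contra hcon
  push_neg at hcon
  obtain ⟨j0, hj0⟩ := hcon
  set S : Set ℝ := {t | t ∈ Set.Icc (0:ℝ) t0 ∧ ∀ s ∈ Set.Icc (0:ℝ) t, ∀ l, 0 ≤ x s l} with hS
  have h0S : (0:ℝ) ∈ S := by
    refine ⟨⟨le_refl 0, ht0⟩, ?_⟩
    intro s hs l
    have : s = 0 := le_antisymm hs.2 hs.1
    rw [this]; exact le_of_lt (hx0 l)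
  have hbddS : BddAbove S := ⟨t0, fun t ht => ht.1.2⟩
  set T := sSup S with hT
  have hT0 : 0 ≤ T := le_csSup hbddS h0S
  have hTt0 : T ≤ t0 := csSup_le ⟨0, h0S⟩ fun t ht => ht.1.2
  have hlt : ∀ s, 0 ≤ s → s < T → ∀ l, 0 ≤ x s l := by
    intro s hs hsT l
    obtain ⟨t, htS, hst⟩ := exists_lt_of_lt_csSup ⟨0, h0S⟩ hsT
    exact htS.2 s ⟨hs, le_of_lt hst⟩ l
  have hnonneg : ∀ s ∈ Set.Icc (0:ℝ) T, ∀ l, 0 ≤ x s l := by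
    intro s hs l
    rcases eq_or_lt_of_le hs.2 with heq | hlt'
    · rcases eq_or_lt_of_le hT0 with heq0 | hTpos
      · have : s = 0 := by rw [heq, ← heq0]
        rw [this]; exact le_of_lt (hx0 l)
      · -- s = T > 0 : take limit from the left
        have hcont : ContinuousAt (fun u => x u l) T :=
          (hasDerivAt_coord (hsol T hT0) l).continuousAt
        have htd : Tendsto (fun u => x u l) (nhdsWithin T (Set.Iio T)) (nhds (x T l)) :=
          hcont.tendsto.mono_left nhdsWithin_le_nhds
        rw [heq]
        refine ge_of_tendsto htd ?_
        have h1 : ∀ᶠ u in nhdsWithin T (Set.Iio T), 0 < u := by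
          apply eventually_nhdsWithin_of_eventually_nhds
          exact eventually_gt_nhds hTpos
        have h2 : ∀ᶠ u in nhdsWithin T (Set.Iio T), u < T :=
          eventually_mem_nhdsWithin.mono fun u hu => hu
        filter_upwards [h1, h2] with u hu1 hu2
        exact hlt u (le_of_lt hu1) hu2 l
    · exact hlt s hs.1 hlt' l
  have hTpos : ∀ j, 0 < x T j := claim T hT0 hnonneg
  rcases eq_or_lt_of_le hTt0 with heq | hlt'
  · rw [heq] at hTpos; exact absurd (hTpos j0) (not_lt.2 hj0)
  · -- T < t0 : extend positivity slightly, contradiction with sSup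
    have hev : ∀ᶠ u in nhds T, ∀ l, 0 < x u l := by
      rw [eventually_all]
      intro l
      have hcont : ContinuousAt (fun u => x u l) T :=
        (hasDerivAt_coord (hsol T hT0) l).continuousAt
      exact hcont.eventually (eventually_gt_nhds (hTpos l))
    obtain ⟨ε, hε, hball⟩ := Metric.eventually_nhds_iff.1 hev
    set t1 := min t0 (T + ε / 2) with ht1
    have hTt1 : T < t1 := lt_min hlt' (by linarith)
    have ht1S : t1 ∈ S := by
      constructor
      · exact ⟨le_trans hT0 (le_of_lt hTt1), min_le_left _ _⟩
      · intro s hs l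
        rcases le_or_gt s T with h | h
        · exact hnonneg s ⟨hs.1, h⟩ l
        · apply le_of_lt
          apply hball
          rw [Real.dist_eq, abs_lt]
          constructor
          · have : s ≤ t1 := hs.2
            have : t1 ≤ T + ε / 2 := min_le_right _ _
            have hε2 : 0 < ε := hε
            linarith [hs.2, min_le_right t0 (T + ε / 2)]
          · linarith [hs.2, min_le_right t0 (T + ε / 2)]
    exact absurd (le_csSup hbddS ht1S) (not_le.2 hTt1)

lemma bd_aux {m r : ℕ} [Nonempty (Fin m)] (a b : Fin r → Fin m → ℕ) (k : Fin r → ℝ)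
    (cp : Fin m → ℝ) (hcp : ∀ l, 0 < cp l)
    (hcpΓ : Matrix.vecMul cp (Gamma a b) = 0)
    (x : ℝ → Fin m → ℝ)
    (hsol : ∀ t : ℝ, 0 ≤ t → HasDerivAt x ((Gamma a b).mulVec (rate a k (x t))) t)
    (hx0 : ∀ l, 0 < x 0 l)
    (hxpos : ∀ t, 0 ≤ t → ∀ l, 0 ≤ x t l) :
    ∃ M : ℝ, 1 ≤ M ∧ ∀ t, 0 ≤ t → ∀ l, x t l ≤ M := by
  classical
  set q : ℝ := dotProduct cp (x 0) with hq
  have hq0 : 0 ≤ q := Finset.sum_nonneg fun l _ => le_of_lt (mul_pos (hcp l) (hx0 l))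
  set cmin : ℝ := Finset.univ.inf' Finset.univ_nonempty cp with hcmin
  have hcmin0 : 0 < cmin := by
    rw [hcmin]; exact Finset.lt_inf'_iff .. |>.2 fun l _ => hcp l
  refine ⟨max 1 (q / cmin), le_max_left _ _, ?_⟩
  intro t ht l
  have hconst := linConst cp hcpΓ hsol t ht
  have h1 : cp l * x t l ≤ dotProduct cp (x t) := by
    unfold dotProduct
    exact Finset.single_le_sum (fun l' _ => mul_nonneg (hcp l').le (hxpos t ht l'))
      (Finset.mem_univ l)
  rw [hconst] at h1
  have h2 : x t l ≤ q / cp l := (le_div_iff₀ (hcp l)).2 (by rw [mul_comm]; exact h1)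
  have h3 : q / cp l ≤ q / cmin :=
    div_le_div_of_nonneg_left hq0 hcmin0 (Finset.inf'_le _ (Finset.mem_univ l))
  exact le_trans (le_trans h2 h3) (le_max_right _ _)

set_option maxHeartbeats 1000000

/-- a conservative mass-action system in which every semi-locking set contains
the support of a semi-conservation vector is persistent. -/
theorem stmt3 {m r : ℕ} (a b : Fin r → Fin m → ℕ) (k : Fin r → ℝ) (hk : ∀ i, 0 < k i)
    (hcons : Conservative a b)
    (hsemi : ∀ I : Set (Fin m), IsSemiLocking a b I → ContainsSemiConsSupport a b I) :
    ∀ x₀ : Fin m → ℝ, (∀ i, 0 < x₀ i) → ∀ x : ℝ → Fin m → ℝ, x 0 = x₀ →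
      IsForwardSolution a b k x → omegaLimitSet x ∩ posBoundary m = ∅ := by
  classical
  intro x₀ hx₀ x hx0eq hsolF
  rw [Set.eq_empty_iff_forall_notMem]
  rintro y ⟨hyω, hy0, i0, hyi0⟩
  obtain ⟨cp, hcp, hcpΓ⟩ := hcons
  have hm : Nonempty (Fin m) := ⟨i0⟩
  have hsol : ∀ t : ℝ, 0 ≤ t → HasDerivAt x ((Gamma a b).mulVec (rate a k (x t))) t := hsolF
  have hx0pos : ∀ l, 0 < x 0 l := by rw [hx0eq]; exact hx₀
  have hpos : ∀ t, 0 ≤ t → ∀ j, 0 < x t j := pos_aux a b k hk cp hcp hcpΓ x hsol hx0pos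
  obtain ⟨M, hM1, hbd⟩ := bd_aux a b k cp hcp hcpΓ x hsol hx0pos
    (fun t ht l => (hpos t ht l).le)
  have hM0 : (0:ℝ) ≤ M := le_trans zero_le_one hM1
  have hd : ∀ t, 0 ≤ t → ∀ l,
      HasDerivAt (fun s => x s l) (((Gamma a b).mulVec (rate a k (x t))) l) t :=
    fun t ht l => hasDerivAt_coord (hsol t ht) l
  have hyω' : MapClusterPt y atTop x := hyω
  -- I is semi-locking
  have hIsl : IsSemiLocking a b {l | y l = 0} := by
    refine ⟨⟨i0, hyi0⟩, ?_⟩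
    rintro i ⟨j, hjI, hbij⟩
    by_contra hno
    push_neg at hno
    have hai : ∀ l, y l = 0 → a i l = 0 := fun l hl => Nat.le_zero.mp (hno l hl)
    have hyj : y j = 0 := hjI
    -- positive lower bound for nonzero coords of y
    obtain ⟨ρ, hρdef⟩ : ∃ ρ : ℝ,
        ρ = Finset.univ.inf' Finset.univ_nonempty (fun l => if y l = 0 then 1 else y l) :=
      ⟨_, rfl⟩
    have hρpos : 0 < ρ := by
      rw [hρdef]
      refine Finset.lt_inf'_iff .. |>.2 fun l _ => ?_
      by_cases h : y l = 0 <;> simp [h]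
      exact lt_of_le_of_ne (hy0 l) (Ne.symm h)
    have hρle : ∀ l, y l ≠ 0 → ρ ≤ y l := by
      intro l hl
      have := Finset.inf'_le (b := l) (fun l => if y l = 0 then 1 else y l) (Finset.mem_univ l)
      rw [hρdef]; simpa only [hl, if_false] using this
    -- positive lower bound for the rate of reaction i near y
    obtain ⟨δ, hδdef⟩ : ∃ δ : ℝ, δ = k i * ∏ l, (y l / 2) ^ (a i l) := ⟨_, rfl⟩
    have hδpos : 0 < δ := by
      rw [hδdef]
      refine mul_pos (hk i) (Finset.prod_pos fun l _ => ?_)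
      rcases Nat.eq_zero_or_pos (a i l) with h | h
      · simp [h]
      · have hlI : y l ≠ 0 := fun h0 => by have := hai l h0; omega
        have hyl : 0 < y l := lt_of_le_of_ne (hy0 l) (Ne.symm hlI)
        positivity
    have hrlow : ∀ z : Fin m → ℝ, (∀ l, y l ≠ 0 → y l / 2 ≤ z l) → (∀ l, 0 ≤ z l) →
        δ ≤ rate a k z i := by
      intro z hz hz0
      rw [hδdef]
      refine mul_le_mul_of_nonneg_left ?_ (hk i).le
      refine Finset.prod_le_prod (fun l _ => pow_nonneg (by linarith [hy0 l]) _) fun l _ => ?_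
      rcases eq_or_ne (y l) 0 with h | h
      · have := hai l h
        simp [this]
      · exact pow_le_pow_left₀ (by linarith [hy0 l]) (hz l h) _
    -- constants
    obtain ⟨C, hCdef⟩ : ∃ C : ℝ,
        C = 1 + ∑ i', (a i' j : ℝ) * (k i' * M ^ (∑ l, a i' l)) := ⟨_, rfl⟩
    have hCsum0 : (0:ℝ) ≤ ∑ i', (a i' j : ℝ) * (k i' * M ^ (∑ l, a i' l)) :=
      Finset.sum_nonneg fun i' _ => mul_nonneg (Nat.cast_nonneg _)
        (mul_nonneg (hk i').le (pow_nonneg hM0 _))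
    have hCpos : 0 < C := by rw [hCdef]; linarith
    obtain ⟨L, hLdef⟩ : ∃ L : ℝ,
        L = 1 + ∑ i', ((∑ l, (a i' l + b i' l) : ℕ) : ℝ) * (k i' * M ^ (∑ l, a i' l)) :=
      ⟨_, rfl⟩
    have hLsum0 : (0:ℝ) ≤ ∑ i', ((∑ l, (a i' l + b i' l) : ℕ) : ℝ)
        * (k i' * M ^ (∑ l, a i' l)) :=
      Finset.sum_nonneg fun i' _ => mul_nonneg (Nat.cast_nonneg _)
        (mul_nonneg (hk i').le (pow_nonneg hM0 _))
    have hLpos : 0 < L := by rw [hLdef]; linarith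
    -- derivative bound
    have hvbd : ∀ t, 0 ≤ t → ∀ l, |((Gamma a b).mulVec (rate a k (x t))) l| ≤ L := by
      intro t ht l
      have hrn : ∀ i', 0 ≤ rate a k (x t) i' :=
        rate_nonneg a k (x t) (fun i' => (hk i').le) (fun l' => (hpos t ht l').le)
      have hrb : ∀ i', rate a k (x t) i' ≤ k i' * M ^ (∑ l', a i' l') :=
        rate_le a k (x t) M (fun i' => (hk i').le) (fun l' => (hpos t ht l').le) (hbd t ht)
      have heq : ((Gamma a b).mulVec (rate a k (x t))) l
          = ∑ i', Gamma a b l i' * rate a k (x t) i' := rfl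
      rw [heq, hLdef]
      calc |∑ i', Gamma a b l i' * rate a k (x t) i'|
          ≤ ∑ i', |Gamma a b l i' * rate a k (x t) i'| := Finset.abs_sum_le_sum_abs _ _
        _ ≤ ∑ i', ((∑ l', (a i' l' + b i' l') : ℕ) : ℝ) * (k i' * M ^ (∑ l', a i' l')) := by
            refine Finset.sum_le_sum fun i' _ => ?_
            rw [abs_mul, abs_of_nonneg (hrn i')]
            have hG : |Gamma a b l i'| ≤ ((∑ l', (a i' l' + b i' l') : ℕ) : ℝ) := by
              have h2 : (a i' l + b i' l : ℕ) ≤ ∑ l', (a i' l' + b i' l') :=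
                Finset.single_le_sum (f := fun l' => a i' l' + b i' l')
                  (fun l' _ => Nat.zero_le _) (Finset.mem_univ l)
              have h2' : ((a i' l + b i' l : ℕ) : ℝ) ≤ ((∑ l', (a i' l' + b i' l') : ℕ) : ℝ) :=
                Nat.cast_le.2 h2
              have hGa : Gamma a b l i' = (b i' l : ℝ) - (a i' l : ℝ) := rfl
              rw [hGa, abs_le]
              push_cast at h2' ⊢
              have hca := Nat.cast_nonneg (α := ℝ) (a i' l)
              have hcb := Nat.cast_nonneg (α := ℝ) (b i' l)
              constructor <;> linarith
            exact mul_le_mul hG (hrb i') (hrn i') (Nat.cast_nonneg _)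
        _ ≤ 1 + ∑ i', ((∑ l', (a i' l' + b i' l') : ℕ) : ℝ) * (k i' * M ^ (∑ l', a i' l')) := by
            linarith
    -- Lipschitz bound along the trajectory
    have hlip : ∀ l, ∀ s t : ℝ, 0 ≤ s → s ≤ t → |x t l - x s l| ≤ L * (t - s) := by
      intro l s t hs hst
      have hmem : ∀ u ∈ Set.Icc s t, 0 ≤ u := fun u hu => le_trans hs hu.1
      have h1 : x t l - x s l ≤ L * (t - s) := by
        have := mono_aux (f := fun u => L * u - x u l)
          (g := fun u => L - ((Gamma a b).mulVec (rate a k (x u))) l) (A := s) (B := t)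
          (fun u hu => by
            simpa using ((hasDerivAt_id u).const_mul L).fun_sub (hd u (hmem u hu) l))
          (fun u hu => by
            have h := hvbd u (hmem u hu) l
            rw [abs_le] at h
            show (0:ℝ) ≤ L - ((Gamma a b).mulVec (rate a k (x u))) l
            linarith [h.2])
          (Set.left_mem_Icc.2 hst) (Set.right_mem_Icc.2 hst) hst
        try simp only at this
        nlinarith [this]
      have h2 : x s l - x t l ≤ L * (t - s) := by
        have := mono_aux (f := fun u => L * u + x u l)
          (g := fun u => L + ((Gamma a b).mulVec (rate a k (x u))) l) (A := s) (B := t)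
          (fun u hu => by
            simpa using ((hasDerivAt_id u).const_mul L).fun_add (hd u (hmem u hu) l))
          (fun u hu => by
            have h := hvbd u (hmem u hu) l
            rw [abs_le] at h
            show (0:ℝ) ≤ L + ((Gamma a b).mulVec (rate a k (x u))) l
            linarith [h.1])
          (Set.left_mem_Icc.2 hst) (Set.right_mem_Icc.2 hst) hst
        try simp only at this
        nlinarith [this]
      rw [abs_le]
      constructor <;> linarith
    -- parameters
    obtain ⟨η, hηdef⟩ : ∃ η : ℝ, η = min (ρ / 2) (δ / (2 * C)) := ⟨_, rfl⟩
    have hηpos : 0 < η := by rw [hηdef]; exact lt_min (by linarith) (by positivity)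
    have hη1 : η ≤ ρ / 2 := by rw [hηdef]; exact min_le_left _ _
    have hη2 : η ≤ δ / (2 * C) := by rw [hηdef]; exact min_le_right _ _
    obtain ⟨hh, hhdef⟩ : ∃ hh : ℝ, hh = η / (2 * L) := ⟨_, rfl⟩
    have hhpos : 0 < hh := by rw [hhdef]; positivity
    have hLh : L * hh = η / 2 := by
      rw [hhdef]
      field_simp
      try ring
    obtain ⟨rr, hrrdef⟩ : ∃ rr : ℝ, rr = min (η / 2) (hh * δ / 4) := ⟨_, rfl⟩
    have hrrpos : 0 < rr := by rw [hrrdef]; exact lt_min (by linarith) (by positivity)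
    have hrr1 : rr ≤ η / 2 := by rw [hrrdef]; exact min_le_left _ _
    have hrr2 : rr ≤ hh * δ / 4 := by rw [hrrdef]; exact min_le_right _ _
    -- pick a time tn ≥ hh with x tn close to y
    have hball : Metric.ball y rr ∈ nhds y := Metric.ball_mem_nhds y hrrpos
    obtain ⟨tn, htn_mem, htn_ge⟩ :=
      ((mapClusterPt_iff_frequently.1 hyω' _ hball).and_eventually (eventually_ge_atTop hh)).exists
    have htn0 : 0 ≤ tn - hh := by linarith
    have hdist : ∀ l, |x tn l - y l| < rr := by
      intro l
      have h1 : dist (x tn) y < rr := htn_mem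
      have h2 := (dist_pi_lt_iff hrrpos).1 h1 l
      rwa [Real.dist_eq] at h2
    -- bounds on the interval [tn - hh, tn]
    have hint : ∀ s ∈ Set.Icc (tn - hh) tn,
        (∀ l, y l ≠ 0 → y l / 2 ≤ x s l) ∧ x s j ≤ δ / (2 * C) := by
      intro s hs
      have hs0 : 0 ≤ s := le_trans htn0 hs.1
      have hclose : ∀ l, |x tn l - x s l| ≤ η / 2 := by
        intro l
        have h1 := hlip l s tn hs0 hs.2
        have h2 : L * (tn - s) ≤ L * hh :=
          mul_le_mul_of_nonneg_left (by linarith [hs.1]) hLpos.le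
        rw [hLh] at h2
        exact le_trans h1 h2
      constructor
      · intro l hl
        have h1 := hρle l hl
        have h2 := hdist l
        have h3 := hclose l
        rw [abs_lt] at h2
        rw [abs_le] at h3
        obtain ⟨h2a, h2b⟩ := h2
        obtain ⟨h3a, h3b⟩ := h3
        linarith
      · have h2 := hdist j
        have h3 := hclose j
        rw [abs_lt] at h2
        rw [abs_le] at h3
        rw [hyj] at h2
        obtain ⟨h2a, h2b⟩ := h2
        obtain ⟨h3a, h3b⟩ := h3
        linarith
    -- derivative of coordinate j is at least δ/2 on the interval
    have hdlow : ∀ s ∈ Set.Icc (tn - hh) tn,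
        δ / 2 ≤ ((Gamma a b).mulVec (rate a k (x s))) j := by
      intro s hs
      have hs0 : 0 ≤ s := le_trans htn0 hs.1
      obtain ⟨h1, h2⟩ := hint s hs
      have hR : δ ≤ rate a k (x s) i := hrlow _ h1 (fun l => (hpos s hs0 l).le)
      have hrn : ∀ i', 0 ≤ rate a k (x s) i' :=
        rate_nonneg a k (x s) (fun i' => (hk i').le) (fun l' => (hpos s hs0 l').le)
      have hxj : 0 ≤ x s j := (hpos s hs0 j).le
      have hA : δ ≤ ∑ i', (b i' j : ℝ) * rate a k (x s) i' := by
        have hb1 : (1:ℝ) ≤ (b i j : ℝ) := by exact_mod_cast hbij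
        have hstep : δ ≤ (b i j : ℝ) * rate a k (x s) i := by nlinarith
        refine le_trans hstep ?_
        exact Finset.single_le_sum (f := fun i' => (b i' j : ℝ) * rate a k (x s) i')
          (fun i' _ => mul_nonneg (Nat.cast_nonneg _) (hrn i')) (Finset.mem_univ i)
      have hB : ∑ i', (a i' j : ℝ) * rate a k (x s) i' ≤ (C - 1) * x s j := by
        have step : ∀ i', (a i' j : ℝ) * rate a k (x s) i'
            ≤ ((a i' j : ℝ) * (k i' * M ^ (∑ l, a i' l))) * x s j := by
          intro i'
          by_cases hz : a i' j = 0
          · simp [hz]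
          · have hr1 : rate a k (x s) i' ≤ (k i' * M ^ (∑ l, a i' l)) * x s j :=
              rate_le_lin a k (x s) M (fun i'' => (hk i'').le) (fun l' => (hpos s hs0 l').le)
                (hbd s hs0) hM1 i' j (by omega)
            calc (a i' j : ℝ) * rate a k (x s) i'
                ≤ (a i' j : ℝ) * ((k i' * M ^ (∑ l, a i' l)) * x s j) :=
                  mul_le_mul_of_nonneg_left hr1 (Nat.cast_nonneg _)
              _ = ((a i' j : ℝ) * (k i' * M ^ (∑ l, a i' l))) * x s j := by ring
        calc ∑ i', (a i' j : ℝ) * rate a k (x s) i'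
            ≤ ∑ i', ((a i' j : ℝ) * (k i' * M ^ (∑ l, a i' l))) * x s j :=
              Finset.sum_le_sum fun i' _ => step i'
          _ = (∑ i', (a i' j : ℝ) * (k i' * M ^ (∑ l, a i' l))) * x s j := by
              rw [Finset.sum_mul]
          _ = (C - 1) * x s j := by rw [hCdef]; ring
      have heq : ((Gamma a b).mulVec (rate a k (x s))) j
          = ∑ i', (b i' j : ℝ) * rate a k (x s) i'
            - ∑ i', (a i' j : ℝ) * rate a k (x s) i' := by
        calc ((Gamma a b).mulVec (rate a k (x s))) j
            = ∑ i', Gamma a b j i' * rate a k (x s) i' := rfl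
          _ = ∑ i', ((b i' j : ℝ) * rate a k (x s) i'
                - (a i' j : ℝ) * rate a k (x s) i') := by
              refine Finset.sum_congr rfl fun i' _ => ?_
              have hGa : Gamma a b j i' = (b i' j : ℝ) - (a i' j : ℝ) := rfl
              rw [hGa]; ring
          _ = _ := Finset.sum_sub_distrib _ _
      rw [heq]
      have hCx : (C - 1) * x s j ≤ C * x s j := by nlinarith
      have hCx2 : C * x s j ≤ C * (δ / (2 * C)) := mul_le_mul_of_nonneg_left h2 hCpos.le
      have hCC : C * (δ / (2 * C)) = δ / 2 := by field_simp; try ring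
      have hB' : ∑ i', (a i' j : ℝ) * rate a k (x s) i' ≤ δ / 2 := by
        rw [hCC] at hCx2
        linarith
      linarith
    -- monotone comparison: x_j grows by at least hh*δ/2 on the interval
    have hfin := mono_aux (f := fun u => x u j - (δ / 2) * u)
        (g := fun u => ((Gamma a b).mulVec (rate a k (x u))) j - δ / 2)
        (A := tn - hh) (B := tn)
        (fun u hu => by
          simpa using (hd u (le_trans htn0 hu.1) j).fun_sub ((hasDerivAt_id u).const_mul (δ / 2)))
        (fun u hu => by
          have := hdlow u hu
          show (0:ℝ) ≤ ((Gamma a b).mulVec (rate a k (x u))) j - δ / 2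
          linarith)
        (Set.left_mem_Icc.2 (by linarith)) (Set.right_mem_Icc.2 (by linarith)) (by linarith)
    try simp only at hfin
    have hxtn : x tn j < rr := by
      have h := hdist j
      rw [hyj] at h
      rw [abs_lt] at h
      linarith [h.2]
    have hx0' : 0 ≤ x (tn - hh) j := (hpos (tn - hh) htn0 j).le
    nlinarith [hfin, hxtn, hx0', hrr2, mul_pos hhpos hδpos]
  -- apply the semi-conservation vector
  obtain ⟨c, hc0, ⟨ic, hic⟩, hcΓ, hsupp⟩ := hsemi _ hIsl
  have hconst := linConst c hcΓ hsol
  have hq : 0 < dotProduct c (x 0) := by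
    have h1 : c ic * x 0 ic ≤ dotProduct c (x 0) := by
      unfold dotProduct
      exact Finset.single_le_sum (f := fun l => c l * x 0 l)
        (fun l _ => mul_nonneg (hc0 l) (hx0pos l).le) (Finset.mem_univ ic)
    have h2 : 0 < c ic * x 0 ic := mul_pos hic (hx0pos ic)
    linarith
  have hcy : dotProduct c y = 0 := by
    unfold dotProduct
    refine Finset.sum_eq_zero fun l _ => ?_
    rcases (hc0 l).eq_or_lt with h | h
    · rw [← h, zero_mul]
    · have hyl : y l = 0 := hsupp l h
      rw [hyl, mul_zero]
  have hcont : Continuous fun z : Fin m → ℝ => dotProduct c z := by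
    unfold dotProduct
    exact continuous_finset_sum _ fun l _ => continuous_const.mul (continuous_apply l)
  have hopen : IsOpen {z : Fin m → ℝ |
      dotProduct c z < dotProduct c (x 0)} :=
    isOpen_lt hcont continuous_const
  have hmem : y ∈ {z : Fin m → ℝ |
      dotProduct c z < dotProduct c (x 0)} := by
    show dotProduct c y < _
    rw [hcy]; exact hq
  obtain ⟨t, htmem, ht0⟩ :=
    ((mapClusterPt_iff_frequently.1 hyω' _ (hopen.mem_nhds hmem)).and_eventually
      (eventually_ge_atTop (0:ℝ))).exists
  have hlt : dotProduct c (x t) < dotProduct c (x 0) := htmem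
  rw [hconst t ht0] at hlt
  exact lt_irrefl _ hlt
end
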